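/- arXiv:1910.01397 — 7 statements merged into one kernel-verified Lean document; each statement's English description precedes it below -/
import Mathlib

section
/- A linearly ordered abelian group G is isomorphic, as an ordered group, to the additive group ℝ of the reals if and only if the underlying linear order of G is order-isomorphic to ℝ. -/
section Holder

variable {G : Type*} [AddCommGroup G] [LinearOrder G] [IsOrderedAddMonoid G]

/-- A linearly ordered abelian group order-isomorphic to `ℝ` is Archimedean. -/
lemma arch_of_orderIso (e : G ≃o ℝ) : Archimedean G := by
  refine ⟨fun x y hy => ?_⟩
  by_contra h
  push_neg at h
  set S : Set ℝ := Set.range fun n : ℕ => e (n • y) with hS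
  have hne : S.Nonempty := ⟨e (0 • y), ⟨0, rfl⟩⟩
  have hbdd : BddAbove S := ⟨e x, by rintro _ ⟨n, rfl⟩; exact e.le_iff_le.2 (h n).le⟩
  have key : ∀ n : ℕ, e (n • y) ≤ e (e.symm (sSup S) - y) := by
    intro n
    have h1 : e ((n + 1) • y) ≤ sSup S := le_csSup hbdd ⟨n + 1, rfl⟩
    have h2 : (n + 1) • y ≤ e.symm (sSup S) := by
      rw [← e.le_iff_le, e.apply_symm_apply]; exact h1
    have h3 : n • y ≤ e.symm (sSup S) - y := by
      rw [le_sub_iff_add_le, ← succ_nsmul]; exact h2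
    exact e.le_iff_le.2 h3
  have h4 : sSup S ≤ e (e.symm (sSup S) - y) :=
    csSup_le hne (by rintro _ ⟨n, rfl⟩; exact key n)
  have h5 : e.symm (sSup S) ≤ e.symm (sSup S) - y := by
    rw [← e.le_iff_le, e.apply_symm_apply]; exact h4
  exact absurd (le_sub_self_iff _ |>.1 h5) hy.not_ge

/-- The cut set used to define the Hölder embedding. -/
def holderSet (u x : G) : Set ℝ :=
  {r | ∃ m n : ℤ, 0 < n ∧ m • u < n • x ∧ r = (m : ℝ) / (n : ℝ)}

/-- The Hölder embedding map. -/
noncomputable def holderMap (u x : G) : ℝ := sSup (holderSet u x)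

variable [Archimedean G] {u : G} (hu : 0 < u)

include hu

lemma holderSet_nonempty (x : G) : (holderSet u x).Nonempty := by
  obtain ⟨k, hk⟩ := Archimedean.arch (-x) hu
  refine ⟨_, -(k + 1), 1, one_pos, ?_, rfl⟩
  have h1 : (-(k : ℤ)) • u ≤ x := by
    rw [neg_zsmul, natCast_zsmul, neg_le]
    exact hk
  have h2 : (-(k + 1) : ℤ) • u < (-(k : ℤ)) • u :=
    (zsmul_lt_zsmul_iff_left hu).2 (by omega)
  rw [one_zsmul]
  exact h2.trans_le h1

lemma holderSet_bddAbove (x : G) : BddAbove (holderSet u x) := by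
  obtain ⟨k, hk⟩ := Archimedean.arch x hu
  refine ⟨(k : ℝ), ?_⟩
  rintro _ ⟨m, n, hn, hmn, rfl⟩
  have hk' : x ≤ (k : ℤ) • u := by rwa [natCast_zsmul]
  have h1 : n • x ≤ (n * k) • u := by
    rw [mul_zsmul]
    exact zsmul_le_zsmul_right hn.le hk'
  have h2 : m • u < (n * k) • u := hmn.trans_le h1
  have h3 : m < n * k := (zsmul_lt_zsmul_iff_left hu).1 h2
  rw [div_le_iff₀ (by exact_mod_cast hn)]
  calc (m : ℝ) ≤ (n * k : ℤ) := by exact_mod_cast h3.le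
    _ = (k : ℝ) * (n : ℝ) := by push_cast; ring

lemma holderSet_add_mem {x y : G} {r₁ r₂ : ℝ} (h₁ : r₁ ∈ holderSet u x)
    (h₂ : r₂ ∈ holderSet u y) : r₁ + r₂ ∈ holderSet u (x + y) := by
  obtain ⟨m₁, n₁, hn₁, hm₁, rfl⟩ := h₁
  obtain ⟨m₂, n₂, hn₂, hm₂, rfl⟩ := h₂
  refine ⟨m₁ * n₂ + m₂ * n₁, n₁ * n₂, mul_pos hn₁ hn₂, ?_, ?_⟩
  · have e1 : (m₁ * n₂ + m₂ * n₁) • u = n₂ • (m₁ • u) + n₁ • (m₂ • u) := by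
      rw [add_zsmul, mul_comm m₁ n₂, mul_zsmul, mul_comm m₂ n₁, mul_zsmul]
    have e2 : (n₁ * n₂) • (x + y) = n₂ • (n₁ • x) + n₁ • (n₂ • y) := by
      rw [zsmul_add, ← mul_zsmul, ← mul_zsmul, mul_comm n₂ n₁]
    rw [e1, e2]
    exact add_lt_add (zsmul_lt_zsmul_right hn₂ hm₁) (zsmul_lt_zsmul_right hn₁ hm₂)
  · have hn₁' : (n₁ : ℝ) ≠ 0 := by exact_mod_cast hn₁.ne'
    have hn₂' : (n₂ : ℝ) ≠ 0 := by exact_mod_cast hn₂.ne'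
    push_cast
    field_simp
    try ring

lemma holderMap_add_le (x y : G) :
    holderMap u (x + y) ≤ holderMap u x + holderMap u y := by
  refine csSup_le (holderSet_nonempty hu _) ?_
  rintro _ ⟨m, n, hn, hmn, rfl⟩
  refine le_of_forall_pos_le_add fun ε hε => ?_
  have hnR : (0 : ℝ) < n := by exact_mod_cast hn
  obtain ⟨N, hN⟩ := exists_nat_gt (3 / (ε * n))
  have hN0R : (3 : ℝ) / (ε * n) > 0 := by positivity
  have hNpos : 0 < (N : ℝ) := lt_trans hN0R hN
  have hN0 : 0 < N := by exact_mod_cast hNpos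
  set c : ℤ := (N : ℤ) * n with hc_def
  have hc : 0 < c := mul_pos (by exact_mod_cast hN0) hn
  have hcR : (0 : ℝ) < (c : ℝ) := by exact_mod_cast hc
  obtain ⟨p, ⟨hp1, hp2⟩, -⟩ := existsUnique_zsmul_near_of_pos hu (c • x)
  obtain ⟨q, ⟨hq1, hq2⟩, -⟩ := existsUnique_zsmul_near_of_pos hu (c • y)
  have hpx : ((p - 1 : ℤ) : ℝ) / (c : ℝ) ≤ holderMap u x := by
    refine le_csSup (holderSet_bddAbove hu x) ⟨p - 1, c, hc, ?_, rfl⟩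
    exact lt_of_lt_of_le ((zsmul_lt_zsmul_iff_left hu).2 (by omega)) hp1
  have hqy : ((q - 1 : ℤ) : ℝ) / (c : ℝ) ≤ holderMap u y := by
    refine le_csSup (holderSet_bddAbove hu y) ⟨q - 1, c, hc, ?_, rfl⟩
    exact lt_of_lt_of_le ((zsmul_lt_zsmul_iff_left hu).2 (by omega)) hq1
  have hmain : (N : ℤ) * m < p + q + 2 := by
    have h1 : ((N : ℤ) * m) • u < (p + q + 2) • u := by
      calc ((N : ℤ) * m) • u = (N : ℤ) • (m • u) := mul_zsmul _ _ _
        _ < (N : ℤ) • (n • (x + y)) :=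
            zsmul_lt_zsmul_right (by exact_mod_cast hN0) hmn
        _ = c • (x + y) := (mul_zsmul _ _ _).symm
        _ = c • x + c • y := zsmul_add _ _ _
        _ < (p + 1) • u + (q + 1) • u := add_lt_add hp2 hq2
        _ = (p + q + 2) • u := by rw [← add_zsmul]; ring_nf
    exact (zsmul_lt_zsmul_iff_left hu).1 h1
  have h3c : (3 : ℝ) / (c : ℝ) ≤ ε := by
    rw [div_le_iff₀ hcR]
    have h' : 3 < (N : ℝ) * (ε * n) := by
      have h'' := (mul_lt_mul_iff_of_pos_right (show (0:ℝ) < ε * n by positivity)).2 hN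
      rwa [div_mul_cancel₀ _ (by positivity : (ε * (n:ℝ)) ≠ 0)] at h''
    have he : ε * (c : ℝ) = (N : ℝ) * (ε * n) := by
      rw [hc_def]; push_cast; ring
    linarith [he ▸ h']
  have e1 : (m : ℝ) / n = (((N : ℤ) * m : ℤ) : ℝ) / (c : ℝ) := by
    rw [hc_def]
    push_cast
    rw [mul_div_mul_left _ _ (ne_of_gt hNpos)]
  have hle : ((N : ℤ) * m) ≤ (p - 1) + (q - 1) + 3 := by omega
  calc (m : ℝ) / n = (((N : ℤ) * m : ℤ) : ℝ) / (c : ℝ) := e1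
    _ ≤ (((p - 1) + (q - 1) + 3 : ℤ) : ℝ) / (c : ℝ) := by
        gcongr
    _ = ((p - 1 : ℤ) : ℝ) / c + ((q - 1 : ℤ) : ℝ) / c + 3 / c := by
        push_cast; ring
    _ ≤ holderMap u x + holderMap u y + ε :=
        add_le_add (add_le_add hpx hqy) h3c

lemma le_holderMap_add (x y : G) :
    holderMap u x + holderMap u y ≤ holderMap u (x + y) := by
  rw [← le_sub_iff_add_le]
  refine csSup_le (holderSet_nonempty hu x) fun r₁ hr₁ => ?_
  rw [le_sub_iff_add_le, add_comm, ← le_sub_iff_add_le]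
  refine csSup_le (holderSet_nonempty hu y) fun r₂ hr₂ => ?_
  rw [le_sub_iff_add_le, add_comm]
  exact le_csSup (holderSet_bddAbove hu _) (holderSet_add_mem hu hr₁ hr₂)

lemma holderMap_add (x y : G) :
    holderMap u (x + y) = holderMap u x + holderMap u y :=
  le_antisymm (holderMap_add_le hu x y) (le_holderMap_add hu x y)

lemma holderMap_zero : holderMap u (0 : G) = 0 := by
  have h := holderMap_add hu (0 : G) 0
  rw [add_zero] at h
  linarith

lemma holderMap_neg (x : G) : holderMap u (-x) = -holderMap u x := by
  have h := holderMap_add hu x (-x)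
  rw [add_neg_cancel, holderMap_zero hu] at h
  linarith

lemma holderMap_sub (x y : G) :
    holderMap u (x - y) = holderMap u x - holderMap u y := by
  rw [sub_eq_add_neg, holderMap_add hu, holderMap_neg hu, sub_eq_add_neg]

lemma holderMap_nsmul (n : ℕ) (x : G) :
    holderMap u (n • x) = n * holderMap u x := by
  induction n with
  | zero => simp [holderMap_zero hu]
  | succ n ih =>
    rw [succ_nsmul, holderMap_add hu, ih]
    push_cast
    ring

lemma holderMap_zsmul (k : ℤ) (x : G) :
    holderMap u (k • x) = k * holderMap u x := by
  induction k using Int.induction_on with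
  | zero => simp [holderMap_zero hu]
  | succ i ih => rw [add_zsmul, one_zsmul, holderMap_add hu, ih]; push_cast; ring
  | pred i ih => rw [sub_zsmul, one_zsmul, sub_eq_add_neg, holderMap_add hu, holderMap_neg hu, ih]; push_cast; ring

lemma holderMap_strictMono : StrictMono (holderMap u) := by
  intro x y hxy
  obtain ⟨k, hk⟩ := Archimedean.arch u (sub_pos.2 hxy)
  have hk0 : 0 < k := by
    rcases Nat.eq_zero_or_pos k with h | h
    · subst h; simp at hk; exact absurd hk (not_le.2 hu)
    · exact h
  have hn : 0 < (k : ℤ) := by exact_mod_cast hk0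
  have hnu : u ≤ (k : ℤ) • (y - x) := by rwa [natCast_zsmul]
  set n : ℤ := (k : ℤ) with hn_def
  have key : ∀ r ∈ holderSet u x, r + 1 / (n : ℝ) ≤ holderMap u y := by
    rintro _ ⟨m, d, hd, hm, rfl⟩
    have hmem : ((n * m + d : ℤ) : ℝ) / ((n * d : ℤ) : ℝ) ∈ holderSet u y := by
      refine ⟨n * m + d, n * d, mul_pos hn hd, ?_, rfl⟩
      have e1 : (n * m + d) • u = n • (m • u) + d • u := by
        rw [add_zsmul, mul_zsmul]
      have e2 : (n * d) • y = n • (d • x) + d • (n • (y - x)) := by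
        rw [← mul_zsmul, ← mul_zsmul, mul_comm d n, ← zsmul_add]
        congr 1
        abel
      rw [e1, e2]
      exact add_lt_add_of_lt_of_le (zsmul_lt_zsmul_right hn hm)
        (zsmul_le_zsmul_right hd.le hnu)
    have hval : ((n * m + d : ℤ) : ℝ) / ((n * d : ℤ) : ℝ) = (m : ℝ) / d + 1 / n := by
      have hdR : (d : ℝ) ≠ 0 := by exact_mod_cast hd.ne'
      have hnR : (n : ℝ) ≠ 0 := by exact_mod_cast hn.ne'
      push_cast
      field_simp
    rw [← hval]
    exact le_csSup (holderSet_bddAbove hu y) hmem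
  have h1 : holderMap u x ≤ holderMap u y - 1 / (n : ℝ) := by
    refine csSup_le (holderSet_nonempty hu x) fun r hr => ?_
    rw [le_sub_iff_add_le]
    exact key r hr
  have h2 : (0 : ℝ) < 1 / (n : ℝ) := by
    have : (0 : ℝ) < (n : ℝ) := by exact_mod_cast hn
    positivity
  linarith

end Holder

/-- A linearly ordered abelian group `G` is isomorphic, as an ordered group,
to the additive group `ℝ` iff the underlying linear order of `G` is order-isomorphic to `ℝ`. -/
theorem stmt_1 {G : Type*} [AddCommGroup G] [LinearOrder G] [IsOrderedAddMonoid G] :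
    (∃ f : G ≃+ ℝ, ∀ a b : G, a ≤ b ↔ f a ≤ f b) ↔ Nonempty (G ≃o ℝ) := by
  constructor
  · rintro ⟨f, hf⟩
    exact ⟨{ toEquiv := f.toEquiv, map_rel_iff' := fun {a b} => (hf a b).symm }⟩
  · rintro ⟨e⟩
    haveI : Archimedean G := arch_of_orderIso e
    have hu : 0 < e.symm 1 - e.symm 0 := sub_pos.2 (e.symm.lt_iff_lt.2 one_pos)
    set u : G := e.symm 1 - e.symm 0 with hu_def
    set f : G → ℝ := holderMap u with hf_def
    have hadd : ∀ x y : G, f (x + y) = f x + f y := fun x y => holderMap_add hu x y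
    have hmono : StrictMono f := holderMap_strictMono hu
    have hf0 : f 0 = 0 := holderMap_zero hu
    -- small positive elements
    have hhalf : ∀ c : G, 0 < c → ∃ b : G, 0 < b ∧ b + b ≤ c := by
      intro c hc
      set a : G := e.symm ((e 0 + e c) / 2) with ha_def
      have hec : e 0 < e c := e.lt_iff_lt.2 hc
      have ha1 : 0 < a := by
        have h : e 0 < e a := by
          rw [ha_def, e.apply_symm_apply]; linarith
        exact e.lt_iff_lt.1 h
      have ha2 : a < c := by
        have h : e a < e c := by
          rw [ha_def, e.apply_symm_apply]; linarith
        exact e.lt_iff_lt.1 h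
      refine ⟨min a (c - a), lt_min ha1 (sub_pos.2 ha2), ?_⟩
      calc min a (c - a) + min a (c - a) ≤ a + (c - a) :=
            add_le_add (min_le_left _ _) (min_le_right _ _)
        _ = c := by abel
    have hsmalldyadic : ∀ k : ℕ, ∃ b : G, 0 < b ∧ (2 ^ k) • b ≤ u := by
      intro k
      induction k with
      | zero => exact ⟨u, hu, by simp⟩
      | succ k ih =>
        obtain ⟨b, hb, hbu⟩ := ih
        obtain ⟨b', hb', hbb'⟩ := hhalf b hb
        refine ⟨b', hb', ?_⟩
        have h : (2 ^ (k + 1)) • b' = (2 ^ k) • (b' + b') := by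
          rw [smul_add, ← add_nsmul]
          congr 1
          ring
        rw [h]
        exact le_trans (nsmul_le_nsmul_right hbb' _) hbu
    have hsmall : ∀ ε : ℝ, 0 < ε → ∃ b : G, 0 < b ∧ f b < ε := by
      intro ε hε
      obtain ⟨k, hk⟩ := pow_unbounded_of_one_lt (f u / ε) (one_lt_two (α := ℝ))
      obtain ⟨b, hb, hbu⟩ := hsmalldyadic k
      refine ⟨b, hb, ?_⟩
      have h1 : f ((2 ^ k) • b) = (2 ^ k : ℝ) * f b := by
        rw [hf_def, holderMap_nsmul hu]
        push_cast; ring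
      have h2 : f ((2 ^ k) • b) ≤ f u := hmono.monotone hbu
      have h3 : f u < ε * 2 ^ k := by
        rw [div_lt_iff₀ hε] at hk
        calc f u < 2 ^ k * ε := hk
          _ = ε * 2 ^ k := by ring
      have h4 : (2 ^ k : ℝ) * f b < ε * 2 ^ k := by rw [← h1]; exact h2.trans_lt h3
      have h5 : (0 : ℝ) < 2 ^ k := by positivity
      nlinarith
    have hfu : 0 < f u := hf0 ▸ hmono hu
    have hzs : ∀ k : ℤ, f (k • u) = k * f u := fun k => holderMap_zsmul hu k u
    have hsurj : Function.Surjective f := by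
      intro r
      set T : Set G := {x | f x ≤ r} with hT_def
      obtain ⟨k, hk⟩ := exists_int_lt (r / f u)
      have hkT : (k • u : G) ∈ T := by
        rw [hT_def, Set.mem_setOf_eq, hzs k]
        rw [lt_div_iff₀ hfu] at hk
        exact hk.le
      obtain ⟨K, hK⟩ := exists_int_gt (r / f u)
      have hKub : ∀ x ∈ T, x ≤ K • u := by
        intro x hx
        by_contra hcon
        push_neg at hcon
        have h1 : f (K • u) < f x := hmono hcon
        rw [hzs K] at h1
        rw [div_lt_iff₀ hfu] at hK
        have h3 : f x ≤ r := hx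
        linarith
      set S : Set ℝ := e '' T with hS_def
      have hSne : S.Nonempty := ⟨e (k • u), ⟨k • u, hkT, rfl⟩⟩
      have hSbdd : BddAbove S :=
        ⟨e (K • u), by rintro _ ⟨t, ht, rfl⟩; exact e.le_iff_le.2 (hKub t ht)⟩
      set x₀ : G := e.symm (sSup S) with hx₀_def
      have hub : ∀ t ∈ T, t ≤ x₀ := by
        intro t ht
        rw [hx₀_def, ← e.le_iff_le, e.apply_symm_apply]
        exact le_csSup hSbdd ⟨t, ht, rfl⟩
      have hlub : ∀ z : G, (∀ t ∈ T, t ≤ z) → x₀ ≤ z := by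
        intro z hz
        rw [hx₀_def, ← e.le_iff_le, e.apply_symm_apply]
        exact csSup_le hSne (by rintro _ ⟨t, ht, rfl⟩; exact e.le_iff_le.2 (hz t ht))
      refine ⟨x₀, le_antisymm ?_ ?_⟩
      · by_contra hcon
        push_neg at hcon
        obtain ⟨b, hb, hfb⟩ := hsmall (f x₀ - r) (by linarith)
        have hnub : ¬ (∀ t ∈ T, t ≤ x₀ - b) := by
          intro hall
          have h := hlub _ hall
          rw [le_sub_self_iff] at h
          exact absurd h (not_le.2 hb)
        push_neg at hnub
        obtain ⟨t, ht, htlt⟩ := hnub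
        have h1 : f (x₀ - b) < f t := hmono htlt
        have h2 : f (x₀ - b) = f x₀ - f b := holderMap_sub hu x₀ b
        have h3 : f t ≤ r := ht
        linarith
      · by_contra hcon
        push_neg at hcon
        obtain ⟨b, hb, hfb⟩ := hsmall (r - f x₀) (by linarith)
        have h1 : f (x₀ + b) = f x₀ + f b := hadd x₀ b
        have h2 : (x₀ + b) ∈ T := by rw [hT_def, Set.mem_setOf_eq, h1]; linarith
        have h3 : x₀ + b ≤ x₀ := hub _ h2
        rw [add_le_iff_nonpos_right] at h3
        exact absurd h3 (not_le.2 hb)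
    exact ⟨{ toEquiv := Equiv.ofBijective f ⟨hmono.injective, hsurj⟩,
              map_add' := hadd }, fun a b => (hmono.le_iff_le).symm⟩
end

section
/- In any odd involutive residuated chain (X, ≤, ∗, t), the set of all idempotent elements is finite if and only if the set of positive idempotent elements (idempotents x with x ≥ t) is finite. -/
/-- In any odd involutive residuated chain `(X, ≤, ∗, t)`, the set of all
idempotent elements is finite iff the set of positive idempotent elements is finite. -/
theorem stmt_5 {X : Type*} [LinearOrder X]
    (star : X → X → X) (res : X → X → X) (t : X)
    (hcomm : ∀ x y, star x y = star y x)
    (hassoc : ∀ x y z, star (star x y) z = star x (star y z))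
    (hunit : ∀ x, star x t = x)
    (hadj : ∀ x z v, star x v ≤ z ↔ v ≤ res x z)
    (hinv : ∀ x, res (res x t) t = x) :
    {x : X | star x x = x}.Finite ↔ {x : X | star x x = x ∧ t ≤ x}.Finite := by
  -- monotonicity of star
  have hmono : ∀ a b c : X, a ≤ b → star a c ≤ star b c := by
    intro a b c hab
    rw [hcomm a c, hadj]
    exact le_trans hab ((hadj c (star b c) b).mp (le_of_eq (hcomm c b)))
  -- x * ¬x ≤ t
  have hxnx : ∀ x : X, star x (res x t) ≤ t := fun x => (hadj x t (res x t)).mpr le_rfl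
  constructor
  · intro h
    exact h.subset (fun x hx => hx.1)
  · intro hP
    set N : Set X := {x : X | star x x = x ∧ x ≤ t} with hN
    have hNfin : N.Finite := by
      have hinj : Set.InjOn (fun x => res x t) N := by
        intro a _ b _ hab
        have := hinv a
        rw [show res a t = res b t from hab] at this
        rw [← this, hinv b]
      have himg : (fun x => res x t) '' N ⊆ {x : X | star x x = x ∧ t ≤ x} := by
        rintro _ ⟨x, ⟨hid, hxt⟩, rfl⟩
        show star (res x t) (res x t) = res x t ∧ t ≤ res x t
        set n := res x t with hn
        have htn : t ≤ n := by
          rw [hn, ← hadj]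
          rw [hunit]
          exact hxt
        constructor
        · -- star n n = n
          apply le_antisymm
          · -- star n n ≤ n = res x t  iff  star x (star n n) ≤ t
            rw [hn, ← hadj]
            have key : star x (star n n) = star (star x n) (star x n) := by
              calc star x (star n n) = star (star x x) (star n n) := by rw [hid]
                _ = star x (star x (star n n)) := by rw [hassoc]
                _ = star x (star (star x n) n) := by rw [hassoc]
                _ = star x (star n (star x n)) := by rw [hcomm (star x n) n]
                _ = star (star x n) (star x n) := by rw [← hassoc, hcomm x n]
            rw [key]
            calc star (star x n) (star x n) ≤ star t (star x n) := hmono _ _ _ (hxnx x)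
              _ = star (star x n) t := hcomm _ _
              _ = star x n := hunit _
              _ ≤ t := hxnx x
          · calc n = star n t := (hunit n).symm
              _ = star t n := hcomm _ _
              _ ≤ star n n := hmono _ _ _ htn
        · exact htn
      exact Set.Finite.of_finite_image (hP.subset himg) hinj
    have hsub : {x : X | star x x = x} ⊆ {x : X | star x x = x ∧ t ≤ x} ∪ N := by
      intro x hx
      rcases le_total t x with h | h
      · exact Or.inl ⟨hx, h⟩
      · exact Or.inr ⟨hx, h⟩
    exact (hP.union hNfin).subset hsub
end

section
/- Let U be a group-like uninorm on the real unit interval [0,1] with unit t ∈ (0,1). Then U(x,y) = 0 whenever min(x,y) = 0; U(x,y) = 1 whenever x > 0, y > 0 and max(x,y) = 1; and 0 < U(x,y) < 1 whenever 0 < x < 1 and 0 < y < 1. -/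
/-- A group-like uninorm on the real unit interval `[0,1]` with unit `t ∈ (0,1)`:
commutative, associative, nondecreasing in each argument, unit `t`, residuated
(`Res x z` is the greatest `v` with `U x v ≤ z`), and the residual complement
`¬x := Res x t` is an involution with `¬t = t`. -/
def IsGroupLikeUninorm (U : unitInterval → unitInterval → unitInterval) (t : unitInterval) : Prop :=
  (∀ x y, U x y = U y x) ∧
  (∀ x y z, U (U x y) z = U x (U y z)) ∧
  (∀ x, Monotone fun y => U x y) ∧
  (∀ y, Monotone fun x => U x y) ∧
  (0 : ℝ) < (t : ℝ) ∧ (t : ℝ) < 1 ∧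
  (∀ x, U x t = x) ∧
  ∃ Res : unitInterval → unitInterval → unitInterval,
    (∀ x z v, U x v ≤ z ↔ v ≤ Res x z) ∧
    (∀ x, Res (Res x t) t = x) ∧
    Res t t = t

/-- boundary behaviour of a group-like uninorm: `U(x,y) = 0` whenever
`min(x,y) = 0`; `U(x,y) = 1` whenever `x,y > 0` and `max(x,y) = 1`; and
`0 < U(x,y) < 1` whenever `0 < x < 1` and `0 < y < 1`. -/
theorem stmt_6 (U : unitInterval → unitInterval → unitInterval) (t : unitInterval)
    (h : IsGroupLikeUninorm U t) :
    (∀ x y : unitInterval, min (x : ℝ) (y : ℝ) = 0 → U x y = 0) ∧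
    (∀ x y : unitInterval, 0 < (x : ℝ) → 0 < (y : ℝ) → max (x : ℝ) (y : ℝ) = 1 → U x y = 1) ∧
    (∀ x y : unitInterval, 0 < (x : ℝ) → (x : ℝ) < 1 → 0 < (y : ℝ) → (y : ℝ) < 1 →
      0 < (U x y : ℝ) ∧ (U x y : ℝ) < 1) := by
  obtain ⟨hc, ha, hm2, hm1, ht0, ht1, hu, Res, hres, hinv, hrt⟩ := h
  -- U x 0 = 0
  have hzero : ∀ x, U x 0 = 0 := by
    intro x
    exact le_antisymm ((hres x 0 0).mpr unitInterval.nonneg') unitInterval.nonneg'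
  -- U 1 1 = 1
  have hU11 : U 1 1 = 1 := by
    refine le_antisymm unitInterval.le_one' ?_
    have := hm2 1 (unitInterval.le_one' : t ≤ 1)
    simpa [hu 1] using this
  -- exchange lemma
  have hshuffle : ∀ a v w, U w (U a v) = U v (U a w) := by
    intro a v w
    calc U w (U a v) = U (U w a) v := (ha w a v).symm
      _ = U (U a w) v := by rw [hc w a]
      _ = U v (U a w) := hc _ _
  have hex : ∀ a v w, U a v ≤ Res w t ↔ U a w ≤ Res v t := by
    intro a v w
    rw [← hres w t (U a v), ← hres v t (U a w), hshuffle a v w]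
  -- negation is antitone
  have hNanti : ∀ a b, a ≤ b → Res b t ≤ Res a t := by
    intro a b hab
    have h1 : U b (Res b t) ≤ t := (hres b t _).mpr le_rfl
    have h2 : U a (Res b t) ≤ U b (Res b t) := hm1 _ hab
    exact (hres a t _).mp (h2.trans h1)
  have hN0 : Res 0 t = 1 := by
    refine le_antisymm unitInterval.le_one' ((hres 0 t 1).mp ?_)
    rw [hc 0 1, hzero 1]
    exact unitInterval.nonneg'
  have hN1 : Res 1 t = 0 := by
    have := hinv 0
    rwa [hN0] at this
  -- top lemma: a > 0 → U a 1 = 1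
  have htop : ∀ a : unitInterval, 0 < (a : ℝ) → U a 1 = 1 := by
    intro a hapos
    by_contra hne
    set c := U a 1 with hcdef
    have hc1 : U c 1 = c := by
      rw [hcdef, ha a 1 1, hU11]
    have hac : a ≤ c := by
      have := hm2 a (unitInterval.le_one' : t ≤ 1)
      simpa [hu a] using this
    have hcpos : (0 : ℝ) < (c : ℝ) := lt_of_lt_of_le hapos hac
    set e := Res c t with hedef
    have hec : Res e t = c := hinv c
    have hene : e ≠ 0 := by
      intro h0
      apply hne
      rw [h0, hN0] at hec
      exact hec.symm
    have hUce : U c e = 0 := by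
      refine le_antisymm ?_ unitInterval.nonneg'
      rw [← hN1]
      exact (hex c e 1).mpr (by rw [hc1, hec])
    have het : e ≤ t := by
      rcases le_total e t with h' | h'
      · exact h'
      · exfalso
        have h1 : U c t ≤ U c e := hm2 c h'
        rw [hu c, hUce] at h1
        have : (c : ℝ) ≤ 0 := h1
        linarith
    have htc : t ≤ c := by
      have := hNanti e t het
      rwa [hrt, hec] at this
    have he0 : e ≤ 0 := by
      have h1 : U t e ≤ U c e := hm1 e htc
      rw [hc t e, hu e, hUce] at h1
      exact h1
    exact hene (le_antisymm he0 unitInterval.nonneg')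
  refine ⟨?_, ?_, ?_⟩
  · -- min = 0
    intro x y hmin
    rcases min_eq_iff.mp hmin with ⟨hx, _⟩ | ⟨hy, _⟩
    · have hx0 : x = 0 := by ext; exact hx
      rw [hx0, hc 0 y, hzero y]
    · have hy0 : y = 0 := by ext; exact hy
      rw [hy0, hzero x]
  · -- max = 1
    intro x y hx hy hmax
    rcases max_eq_iff.mp hmax with ⟨hx1, _⟩ | ⟨hy1, _⟩
    · have : x = 1 := by ext; exact hx1
      rw [this, hc 1 y, htop y hy]
    · have : y = 1 := by ext; exact hy1
      rw [this, htop x hx]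
  · -- interior
    intro x y hx0 hx1 hy0 hy1
    constructor
    · -- 0 < U x y
      by_contra hle
      push_neg at hle
      have h0 : U x y = 0 := le_antisymm (by exact_mod_cast hle) unitInterval.nonneg'
      have h1 : U x y ≤ Res 1 t := by rw [hN1, h0]
      have h2 : U x 1 ≤ Res y t := (hex x y 1).mp h1
      rw [htop x hx0] at h2
      have h3 : Res y t = 1 := le_antisymm unitInterval.le_one' h2
      have h4 : y = 0 := by
        have := hinv y
        rw [h3, hN1] at this
        exact this.symm
      rw [h4] at hy0
      exact lt_irrefl _ (by exact_mod_cast hy0)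
    · -- U x y < 1
      by_contra hge
      push_neg at hge
      have h1 : U x y = 1 := le_antisymm unitInterval.le_one'
        (by exact_mod_cast hge)
      set nx := Res x t with hnxdef
      have hnxne : nx ≠ 0 := by
        intro h0
        have := hinv x
        rw [← hnxdef, h0, hN0] at this
        rw [← this] at hx1
        simp at hx1
      have hnxpos : 0 < (nx : ℝ) :=
        lt_of_le_of_ne nx.2.1 (fun he => hnxne (by ext; exact he.symm))
      have hkey : U nx (U x y) ≤ y := by
        rw [← ha nx x y]
        have h2 : U nx x ≤ t := by
          rw [hc nx x]
          exact (hres x t nx).mpr le_rfl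
        have h3 : U (U nx x) y ≤ U t y := hm1 y h2
        rw [hc t y, hu y] at h3
        exact h3
      rw [h1, htop nx hnxpos] at hkey
      have : (1 : ℝ) ≤ (y : ℝ) := hkey
      linarith
end

section
/- If U₁ and U₂ are group-like uninorms on the real unit interval [0,1] such that U₁(x,y) = U₂(x,y) for all x, y in the open interval (0,1), then U₁ = U₂ on all of [0,1]² (in particular their unit elements coincide). -/
/-- Absorbing zero: `U x 0 = 0` for any residuated uninorm. -/
lemma glu_zero {U : unitInterval → unitInterval → unitInterval} {t : unitInterval}
    (h : IsGroupLikeUninorm U t) (x : unitInterval) : U x 0 = 0 := by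
  obtain ⟨-, -, -, -, -, -, -, Res, hres, -, -⟩ := h
  have := (hres x 0 0).mpr unitInterval.nonneg'
  exact le_antisymm this unitInterval.nonneg'

/-- `U x 1` is the least upper bound of `U x v` over `v < 1`. -/
lemma glu_sup {U : unitInterval → unitInterval → unitInterval} {t : unitInterval}
    (h : IsGroupLikeUninorm U t) (x z : unitInterval)
    (H : ∀ v : unitInterval, (v : ℝ) < 1 → U x v ≤ z) : U x 1 ≤ z := by
  obtain ⟨-, -, -, -, -, -, -, Res, hres, -, -⟩ := h
  refine (hres x z 1).mpr ?_
  by_contra hlt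
  push_neg at hlt
  have hr1 : ((Res x z : ℝ)) < 1 := lt_of_lt_of_le (Subtype.coe_lt_coe.mpr hlt) (by norm_num)
  set r := Res x z with hr
  -- pick v = (r+1)/2
  have hmem : ((r : ℝ) + 1) / 2 ∈ unitInterval := by
    constructor
    · nlinarith [r.2.1]
    · nlinarith [r.2.2]
  set v : unitInterval := ⟨((r : ℝ) + 1) / 2, hmem⟩ with hv
  have hv1 : (v : ℝ) < 1 := by show ((r : ℝ) + 1) / 2 < 1; linarith
  have h2 : (v : ℝ) ≤ (r : ℝ) := (hres x z v).mp (H v hv1)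
  have h3 : ((r : ℝ) + 1) / 2 ≤ (r : ℝ) := h2
  linarith

lemma glu_le {U₁ U₂ : unitInterval → unitInterval → unitInterval} {t₁ t₂ : unitInterval}
    (h₁ : IsGroupLikeUninorm U₁ t₁) (h₂ : IsGroupLikeUninorm U₂ t₂)
    (hag : ∀ x y : unitInterval, 0 < (x : ℝ) → (x : ℝ) < 1 → 0 < (y : ℝ) → (y : ℝ) < 1 →
      U₁ x y ≤ U₂ x y) : ∀ x y, U₁ x y ≤ U₂ x y := by
  have hc₁ := h₁.1
  have hc₂ := h₂.1
  have hm₂ := h₂.2.2.1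
  have hm₂' := h₂.2.2.2.1
  intro x y
  rcases eq_or_lt_of_le x.2.1 with hx0 | hx0
  · have : x = 0 := Subtype.ext hx0.symm
    subst this
    rw [hc₁, glu_zero h₁]
    exact unitInterval.nonneg'
  rcases eq_or_lt_of_le y.2.1 with hy0 | hy0
  · have : y = 0 := Subtype.ext hy0.symm
    subst this
    rw [glu_zero h₁]
    exact unitInterval.nonneg'
  rcases lt_or_eq_of_le y.2.2 with hy1 | hy1
  · -- y interior
    rcases lt_or_eq_of_le x.2.2 with hx1 | hx1
    · exact hag x y hx0 hx1 hy0 hy1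
    · -- x = 1
      have hx : x = 1 := Subtype.ext hx1
      subst hx
      rw [hc₁, hc₂]
      refine glu_sup h₁ y (U₂ y 1) ?_
      intro v hv1
      rcases eq_or_lt_of_le v.2.1 with hv0 | hv0
      · have : v = 0 := Subtype.ext hv0.symm
        subst this
        rw [glu_zero h₁]
        exact unitInterval.nonneg'
      · calc U₁ y v ≤ U₂ y v := hag y v hy0 hy1 hv0 hv1
          _ ≤ U₂ y 1 := hm₂ y unitInterval.le_one'
  · -- y = 1
    have hy : y = 1 := Subtype.ext hy1
    subst hy
    refine glu_sup h₁ x (U₂ x 1) ?_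
    intro v hv1
    rcases eq_or_lt_of_le v.2.1 with hv0 | hv0
    · have : v = 0 := Subtype.ext hv0.symm
      subst this
      rw [glu_zero h₁]
      exact unitInterval.nonneg'
    rcases lt_or_eq_of_le x.2.2 with hx1 | hx1
    · calc U₁ x v ≤ U₂ x v := hag x v hx0 hx1 hv0 hv1
        _ ≤ U₂ x 1 := hm₂ x unitInterval.le_one'
    · have hx : x = 1 := Subtype.ext hx1
      subst hx
      rw [hc₁]
      refine glu_sup h₁ v (U₂ 1 1) ?_
      intro w hw1
      rcases eq_or_lt_of_le w.2.1 with hw0 | hw0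
      · have : w = 0 := Subtype.ext hw0.symm
        subst this
        rw [glu_zero h₁]
        exact unitInterval.nonneg'
      · calc U₁ v w ≤ U₂ v w := hag v w hv0 hv1 hw0 hw1
          _ ≤ U₂ v 1 := hm₂ v unitInterval.le_one'
          _ ≤ U₂ 1 1 := hm₂' 1 unitInterval.le_one'

/-- two group-like uninorms agreeing on the open unit square agree
everywhere; in particular their unit elements coincide. -/
theorem stmt_7 (U₁ U₂ : unitInterval → unitInterval → unitInterval) (t₁ t₂ : unitInterval)
    (h₁ : IsGroupLikeUninorm U₁ t₁) (h₂ : IsGroupLikeUninorm U₂ t₂)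
    (hagree : ∀ x y : unitInterval, 0 < (x : ℝ) → (x : ℝ) < 1 → 0 < (y : ℝ) → (y : ℝ) < 1 →
      U₁ x y = U₂ x y) :
    U₁ = U₂ ∧ t₁ = t₂ := by
  constructor
  · funext x y
    exact le_antisymm
      (glu_le h₁ h₂ (fun x y a b c d => (hagree x y a b c d).le) x y)
      (glu_le h₂ h₁ (fun x y a b c d => (hagree x y a b c d).ge) x y)
  · obtain ⟨-, -, -, -, ht₁0, ht₁1, hu₁, -⟩ := h₁
    obtain ⟨hc₂, -, -, -, ht₂0, ht₂1, hu₂, -⟩ := h₂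
    have h := hagree t₂ t₁ ht₂0 ht₂1 ht₁0 ht₁1
    rw [hu₁ t₂, hc₂, hu₂ t₁] at h
    exact h.symm
end

section
/- Let φ : (0,1) → ℝ be an order isomorphism from the open real unit interval onto the real line. Define U : [0,1]² → [0,1] by U(x,y) = φ⁻¹(φ(x) + φ(y)) if x, y ∈ (0,1); U(x,y) = 0 if min(x,y) = 0; and U(x,y) = 1 if x ≠ 0, y ≠ 0 and max(x,y) = 1. Then U is a group-like uninorm with unit element t = φ⁻¹(0). -/
set_option linter.unusedSectionVars false


noncomputable def ooi (a : Set.Ioo (0:ℝ) 1) : unitInterval := ⟨a.1, a.2.1.le, a.2.2.le⟩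

lemma ooi_coe (a : Set.Ioo (0:ℝ) 1) : ((ooi a : unitInterval) : ℝ) = (a : ℝ) := rfl

lemma ooi_mem (a : Set.Ioo (0:ℝ) 1) : ((ooi a : unitInterval) : ℝ) ∈ Set.Ioo (0:ℝ) 1 := a.2

lemma tri (x : unitInterval) : (x:ℝ) = 0 ∨ (x:ℝ) = 1 ∨ (x:ℝ) ∈ Set.Ioo (0:ℝ) 1 := by
  rcases eq_or_lt_of_le x.2.1 with h | h
  · exact Or.inl h.symm
  rcases eq_or_lt_of_le x.2.2 with h' | h'
  · exact Or.inr (Or.inl h')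
  · exact Or.inr (Or.inr ⟨h, h'⟩)

noncomputable def myRes (φ : Set.Ioo (0:ℝ) 1 ≃o ℝ) (x z : unitInterval) : unitInterval :=
  if (x:ℝ) = 0 then 1
  else if (z:ℝ) = 1 then 1
  else if hx : (x:ℝ) ∈ Set.Ioo (0:ℝ) 1 then
    if hz : (z:ℝ) ∈ Set.Ioo (0:ℝ) 1 then ooi (φ.symm (φ ⟨z, hz⟩ - φ ⟨x, hx⟩))
    else 0
  else 0

section
variable (φ : Set.Ioo (0 : ℝ) 1 ≃o ℝ)
    (U : unitInterval → unitInterval → unitInterval)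
    (h0 : ∀ x y : unitInterval, min (x : ℝ) (y : ℝ) = 0 → U x y = 0)
    (h1 : ∀ x y : unitInterval, (x : ℝ) ≠ 0 → (y : ℝ) ≠ 0 → max (x : ℝ) (y : ℝ) = 1 →
      U x y = 1)
    (hmid : ∀ (x y : unitInterval) (hx : (x : ℝ) ∈ Set.Ioo (0 : ℝ) 1)
      (hy : (y : ℝ) ∈ Set.Ioo (0 : ℝ) 1),
      (U x y : ℝ) = (φ.symm (φ ⟨(x : ℝ), hx⟩ + φ ⟨(y : ℝ), hy⟩) : ℝ))

include h0 in
lemma U_zl (x y : unitInterval) (hx : (x:ℝ) = 0) : U x y = 0 := by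
  apply h0; rw [hx]; exact min_eq_left y.2.1

include h0 in
lemma U_zr (x y : unitInterval) (hy : (y:ℝ) = 0) : U x y = 0 := by
  apply h0; rw [hy]; exact min_eq_right x.2.1

include h1 in
lemma U_ol (x y : unitInterval) (hx0 : (x:ℝ) ≠ 0) (hy0 : (y:ℝ) ≠ 0) (hx : (x:ℝ) = 1) :
    U x y = 1 := h1 x y hx0 hy0 (by rw [hx]; exact max_eq_left y.2.2)

include h1 in
lemma U_or (x y : unitInterval) (hx0 : (x:ℝ) ≠ 0) (hy0 : (y:ℝ) ≠ 0) (hy : (y:ℝ) = 1) :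
    U x y = 1 := h1 x y hx0 hy0 (by rw [hy]; exact max_eq_right x.2.2)

include hmid in
lemma U_int_mem (x y : unitInterval) (hx : (x:ℝ) ∈ Set.Ioo (0:ℝ) 1)
    (hy : (y:ℝ) ∈ Set.Ioo (0:ℝ) 1) : ((U x y : ℝ)) ∈ Set.Ioo (0:ℝ) 1 := by
  rw [hmid x y hx hy]; exact (φ.symm _).2

include h0 h1 hmid in
lemma U_eq_zero_iff (x y : unitInterval) : (U x y : ℝ) = 0 ↔ (x:ℝ) = 0 ∨ (y:ℝ) = 0 := by
  constructor
  · intro h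
    by_contra hc
    push_neg at hc
    obtain ⟨hx0, hy0⟩ := hc
    rcases tri x with h'|h'|hx
    · exact hx0 h'
    · rw [U_ol U h1 x y hx0 hy0 h'] at h; norm_num at h
    rcases tri y with h'|h'|hy
    · exact hy0 h'
    · rw [U_or U h1 x y hx0 hy0 h'] at h; norm_num at h
    · have := U_int_mem φ U hmid x y hx hy
      rw [h] at this; exact lt_irrefl _ this.1
  · rintro (h|h)
    · rw [U_zl U h0 x y h]; rfl
    · rw [U_zr U h0 x y h]; rfl

include h0 h1 hmid in
lemma U_eq_one_iff (x y : unitInterval) (hx0 : (x:ℝ) ≠ 0) (hy0 : (y:ℝ) ≠ 0) :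
    (U x y : ℝ) = 1 ↔ (x:ℝ) = 1 ∨ (y:ℝ) = 1 := by
  constructor
  · intro h
    by_contra hc
    push_neg at hc
    obtain ⟨hx1, hy1⟩ := hc
    have hx : (x:ℝ) ∈ Set.Ioo (0:ℝ) 1 := by
      rcases tri x with h'|h'|h' <;> first | exact absurd h' hx0 | exact absurd h' hx1 | exact h'
    have hy : (y:ℝ) ∈ Set.Ioo (0:ℝ) 1 := by
      rcases tri y with h'|h'|h' <;> first | exact absurd h' hy0 | exact absurd h' hy1 | exact h'
    have := U_int_mem φ U hmid x y hx hy
    rw [h] at this; exact lt_irrefl _ this.2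
  · rintro (h|h)
    · rw [U_ol U h1 x y hx0 hy0 h]; rfl
    · rw [U_or U h1 x y hx0 hy0 h]; rfl

include hmid in
lemma U_int (x y : unitInterval) (hx : (x:ℝ) ∈ Set.Ioo (0:ℝ) 1)
    (hy : (y:ℝ) ∈ Set.Ioo (0:ℝ) 1) :
    U x y = ooi (φ.symm (φ ⟨(x:ℝ), hx⟩ + φ ⟨(y:ℝ), hy⟩)) :=
  Subtype.ext (hmid x y hx hy)

include hmid in
lemma phi_U_int (x y : unitInterval) (hx : (x:ℝ) ∈ Set.Ioo (0:ℝ) 1)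
    (hy : (y:ℝ) ∈ Set.Ioo (0:ℝ) 1) :
    φ ⟨(U x y : ℝ), U_int_mem φ U hmid x y hx hy⟩ = φ ⟨(x:ℝ), hx⟩ + φ ⟨(y:ℝ), hy⟩ := by
  have : (⟨(U x y : ℝ), U_int_mem φ U hmid x y hx hy⟩ : Set.Ioo (0:ℝ) 1)
      = φ.symm (φ ⟨(x:ℝ), hx⟩ + φ ⟨(y:ℝ), hy⟩) := Subtype.ext (hmid x y hx hy)
  rw [this, OrderIso.apply_symm_apply]

include h0 h1 hmid in
lemma U_comm (x y : unitInterval) : U x y = U y x := by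
  rcases tri x with hx|hx|hx
  · rw [U_zl U h0 x y hx, U_zr U h0 y x hx]
  all_goals rcases tri y with hy|hy|hy
  · rw [U_zr U h0 x y hy, U_zl U h0 y x hy]
  · rw [U_ol U h1 x y (by rw [hx]; norm_num) (by rw [hy]; norm_num) hx,
        U_ol U h1 y x (by rw [hy]; norm_num) (by rw [hx]; norm_num) hy]
  · rw [U_ol U h1 x y (by rw [hx]; norm_num) hy.1.ne' hx,
        U_or U h1 y x hy.1.ne' (by rw [hx]; norm_num) hx]
  · rw [U_zr U h0 x y hy, U_zl U h0 y x hy]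
  · rw [U_or U h1 x y hx.1.ne' (by rw [hy]; norm_num) hy,
        U_ol U h1 y x (by rw [hy]; norm_num) hx.1.ne' hy]
  · rw [U_int φ U hmid x y hx hy, U_int φ U hmid y x hy hx, add_comm]

include h0 h1 hmid in
lemma triple_one (x y z : unitInterval) (hx0 : (x:ℝ) ≠ 0) (hy0 : (y:ℝ) ≠ 0)
    (hz0 : (z:ℝ) ≠ 0) (h : (x:ℝ) = 1 ∨ (y:ℝ) = 1 ∨ (z:ℝ) = 1) : U (U x y) z = 1 := by
  have hxy0 : ((U x y : ℝ)) ≠ 0 := fun hc => by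
    rcases (U_eq_zero_iff φ U h0 h1 hmid x y).mp hc with h'|h'
    · exact hx0 h'
    · exact hy0 h'
  rcases h with h'|h'|h'
  · have hxy1 : ((U x y : ℝ)) = 1 := by rw [U_ol U h1 x y hx0 hy0 h']; rfl
    exact U_ol U h1 (U x y) z hxy0 hz0 hxy1
  · have hxy1 : ((U x y : ℝ)) = 1 := by rw [U_or U h1 x y hx0 hy0 h']; rfl
    exact U_ol U h1 (U x y) z hxy0 hz0 hxy1
  · exact U_or U h1 (U x y) z hxy0 hz0 h'

include h0 h1 hmid in
lemma U_assoc (x y z : unitInterval) : U (U x y) z = U x (U y z) := by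
  rcases tri x with hx|hx
  · rw [U_zl U h0 x y hx, U_zl U h0 x (U y z) hx, U_zl U h0 0 z rfl]
  have hx0 : (x:ℝ) ≠ 0 := by
    rcases hx with h'|h'
    · rw [h']; norm_num
    · exact h'.1.ne'
  rcases tri y with hy|hy
  · rw [U_zr U h0 x y hy, U_zl U h0 y z hy, U_zl U h0 0 z rfl, U_zr U h0 x 0 rfl]
  have hy0 : (y:ℝ) ≠ 0 := by
    rcases hy with h'|h'
    · rw [h']; norm_num
    · exact h'.1.ne'
  rcases tri z with hz|hz
  · rw [U_zr U h0 (U x y) z hz, U_zr U h0 y z hz, U_zr U h0 x 0 rfl]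
  have hz0 : (z:ℝ) ≠ 0 := by
    rcases hz with h'|h'
    · rw [h']; norm_num
    · exact h'.1.ne'
  by_cases hone : (x:ℝ) = 1 ∨ (y:ℝ) = 1 ∨ (z:ℝ) = 1
  · rw [triple_one φ U h0 h1 hmid x y z hx0 hy0 hz0 hone,
        U_comm φ U h0 h1 hmid x (U y z),
        triple_one φ U h0 h1 hmid y z x hy0 hz0 hx0 (by tauto)]
  · push_neg at hone
    have hxi : (x:ℝ) ∈ Set.Ioo (0:ℝ) 1 := hx.resolve_left hone.1
    have hyi : (y:ℝ) ∈ Set.Ioo (0:ℝ) 1 := hy.resolve_left hone.2.1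
    have hzi : (z:ℝ) ∈ Set.Ioo (0:ℝ) 1 := hz.resolve_left hone.2.2
    have hxy : ((U x y : ℝ)) ∈ Set.Ioo (0:ℝ) 1 := U_int_mem φ U hmid x y hxi hyi
    have hyz : ((U y z : ℝ)) ∈ Set.Ioo (0:ℝ) 1 := U_int_mem φ U hmid y z hyi hzi
    rw [U_int φ U hmid (U x y) z hxy hzi, U_int φ U hmid x (U y z) hxi hyz,
        phi_U_int φ U hmid x y hxi hyi, phi_U_int φ U hmid y z hyi hzi, add_assoc]

include h0 h1 hmid in
lemma U_mono (x y₁ y₂ : unitInterval) (h : y₁ ≤ y₂) : U x y₁ ≤ U x y₂ := by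
  rcases tri y₁ with hy1|hy1|hy1
  · rw [U_zr U h0 x y₁ hy1]; exact unitInterval.nonneg'
  · have h2 : (y₂:ℝ) = 1 := le_antisymm y₂.2.2 (by rw [← hy1]; exact Subtype.coe_le_coe.mpr h)
    have : y₁ = y₂ := Subtype.ext (hy1.trans h2.symm)
    rw [this]
  rcases tri y₂ with hy2|hy2|hy2
  · exact absurd (le_antisymm (hy2 ▸ Subtype.coe_le_coe.mpr h) y₁.2.1) hy1.1.ne'
  all_goals rcases tri x with hx|hx|hx
  · rw [U_zl U h0 x y₂ hx, U_zl U h0 x y₁ hx]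
  · rw [U_or U h1 x y₂ (by rw [hx]; norm_num) (by rw [hy2]; norm_num) hy2]
    exact unitInterval.le_one'
  · rw [U_or U h1 x y₂ hx.1.ne' (by rw [hy2]; norm_num) hy2]
    exact unitInterval.le_one'
  · rw [U_zl U h0 x y₂ hx, U_zl U h0 x y₁ hx]
  · rw [U_ol U h1 x y₂ (by rw [hx]; norm_num) hy2.1.ne' hx,
        U_ol U h1 x y₁ (by rw [hx]; norm_num) hy1.1.ne' hx]
  · rw [U_int φ U hmid x y₁ hx hy1, U_int φ U hmid x y₂ hx hy2]
    rw [← Subtype.coe_le_coe, ooi_coe, ooi_coe]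
    refine Subtype.coe_le_coe.mpr (φ.symm.le_iff_le.mpr ?_)
    have hle : (⟨(y₁:ℝ), hy1⟩ : Set.Ioo (0:ℝ) 1) ≤ ⟨(y₂:ℝ), hy2⟩ := Subtype.coe_le_coe.mpr h
    exact add_le_add_right (φ.le_iff_le.mpr hle) _

include h0 h1 hmid in
lemma U_galois (x z v : unitInterval) : U x v ≤ z ↔ v ≤ myRes φ x z := by
  unfold myRes
  split_ifs with hx0 hz1 hx hz
  · constructor
    · intro _; exact unitInterval.le_one'
    · intro _; rw [U_zl U h0 x v hx0]; exact unitInterval.nonneg'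
  · constructor
    · intro _; exact unitInterval.le_one'
    · intro _
      have : z = 1 := Subtype.ext hz1
      rw [this]; exact unitInterval.le_one'
  · -- x interior, z interior
    rcases tri v with hv|hv|hv
    · constructor
      · intro _
        rw [← Subtype.coe_le_coe, hv, ooi_coe]
        exact (φ.symm _).2.1.le
      · intro _; rw [U_zr U h0 x v hv]; exact unitInterval.nonneg'
    · constructor
      · intro hle
        exfalso
        have h1' : ((U x v : ℝ)) = 1 := by rw [U_or U h1 x v hx0 (by rw [hv]; norm_num) hv]; rfl
        have hc := Subtype.coe_le_coe.mpr hle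
        rw [h1'] at hc
        exact hz1 (le_antisymm z.2.2 hc)
      · intro hle
        exfalso
        have hc := Subtype.coe_le_coe.mpr hle
        rw [hv, ooi_coe] at hc
        exact absurd hc (not_le.mpr (φ.symm _).2.2)
    · rw [U_int φ U hmid x v hx hv, ← Subtype.coe_le_coe, ooi_coe,
          ← Subtype.coe_le_coe (α := ℝ), ooi_coe]
      have e1 : ((φ.symm (φ ⟨(x:ℝ), hx⟩ + φ ⟨(v:ℝ), hv⟩) : Set.Ioo (0:ℝ) 1) : ℝ) ≤ (z:ℝ)
          ↔ (φ.symm (φ ⟨(x:ℝ), hx⟩ + φ ⟨(v:ℝ), hv⟩)) ≤ ⟨(z:ℝ), hz⟩ := Iff.rfl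
      have e2 : (v:ℝ) ≤ ((φ.symm (φ ⟨(z:ℝ), hz⟩ - φ ⟨(x:ℝ), hx⟩) : Set.Ioo (0:ℝ) 1) : ℝ)
          ↔ (⟨(v:ℝ), hv⟩ : Set.Ioo (0:ℝ) 1) ≤ φ.symm (φ ⟨(z:ℝ), hz⟩ - φ ⟨(x:ℝ), hx⟩) := Iff.rfl
      rw [e1, e2, φ.symm_apply_le, φ.le_symm_apply]
      constructor
      · intro h'; linarith
      · intro h'; linarith
  · -- x interior, z = 0
    have hz0 : (z:ℝ) = 0 := by
      rcases tri z with h'|h'|h' <;> first | exact h' | exact absurd h' hz1 | exact absurd h' hz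
    constructor
    · intro hle
      have hc := Subtype.coe_le_coe.mpr hle
      rw [hz0] at hc
      have huv : ((U x v : ℝ)) = 0 := le_antisymm hc (U x v).2.1
      rw [U_eq_zero_iff φ U h0 h1 hmid] at huv
      rcases huv with h'|h'
      · exact absurd h' hx0
      · rw [← Subtype.coe_le_coe, h']; norm_num
    · intro hle
      have hc := Subtype.coe_le_coe.mpr hle
      have hv0 : (v:ℝ) = 0 := le_antisymm (by simpa using hc) v.2.1
      rw [U_zr U h0 x v hv0, ← Subtype.coe_le_coe, hz0]
      norm_num
  · -- x = 1
    have hx1 : (x:ℝ) = 1 := by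
      rcases tri x with h'|h'|h' <;> first | exact absurd h' hx0 | exact h' | exact absurd h' hx
    constructor
    · intro hle
      rcases tri v with hv|hv|hv
      · rw [← Subtype.coe_le_coe, hv]; norm_num
      all_goals exfalso
      all_goals have hv0 : (v:ℝ) ≠ 0 := by first | (rw [hv]; norm_num) | exact hv.1.ne'
      all_goals have h1' : ((U x v : ℝ)) = 1 := by rw [U_ol U h1 x v hx0 hv0 hx1]; rfl
      all_goals have hc := Subtype.coe_le_coe.mpr hle
      all_goals rw [h1'] at hc
      all_goals exact hz1 (le_antisymm z.2.2 hc)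
    · intro hle
      have hc := Subtype.coe_le_coe.mpr hle
      have hv0 : (v:ℝ) = 0 := le_antisymm (by simpa using hc) v.2.1
      rw [U_zr U h0 x v hv0]; exact unitInterval.nonneg'

end

lemma res_zero (φ : Set.Ioo (0:ℝ) 1 ≃o ℝ) (x z : unitInterval) (hx : (x:ℝ) = 0) :
    myRes φ x z = 1 := by
  unfold myRes; rw [if_pos hx]

lemma res_one (φ : Set.Ioo (0:ℝ) 1 ≃o ℝ) (x z : unitInterval) (hx : (x:ℝ) = 1)
    (hz1 : (z:ℝ) ≠ 1) : myRes φ x z = 0 := by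
  unfold myRes
  rw [if_neg (by rw [hx]; norm_num), if_neg hz1,
      dif_neg (by simp [Set.mem_Ioo, hx])]

lemma res_int (φ : Set.Ioo (0:ℝ) 1 ≃o ℝ) (x z : unitInterval)
    (hx : (x:ℝ) ∈ Set.Ioo (0:ℝ) 1) (hz : (z:ℝ) ∈ Set.Ioo (0:ℝ) 1) :
    myRes φ x z = ooi (φ.symm (φ ⟨(z:ℝ), hz⟩ - φ ⟨(x:ℝ), hx⟩)) := by
  unfold myRes
  rw [if_neg hx.1.ne', if_neg hz.2.ne, dif_pos hx, dif_pos hz]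

theorem stmt_8' (φ : Set.Ioo (0 : ℝ) 1 ≃o ℝ)
    (U : unitInterval → unitInterval → unitInterval)
    (h0 : ∀ x y : unitInterval, min (x : ℝ) (y : ℝ) = 0 → U x y = 0)
    (h1 : ∀ x y : unitInterval, (x : ℝ) ≠ 0 → (y : ℝ) ≠ 0 → max (x : ℝ) (y : ℝ) = 1 →
      U x y = 1)
    (hmid : ∀ (x y : unitInterval) (hx : (x : ℝ) ∈ Set.Ioo (0 : ℝ) 1)
      (hy : (y : ℝ) ∈ Set.Ioo (0 : ℝ) 1),
      (U x y : ℝ) = (φ.symm (φ ⟨(x : ℝ), hx⟩ + φ ⟨(y : ℝ), hy⟩) : ℝ)) :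
    ∃ t : unitInterval, (t : ℝ) = (φ.symm 0 : ℝ) ∧
      ((∀ x y, U x y = U y x) ∧
      (∀ x y z, U (U x y) z = U x (U y z)) ∧
      (∀ x, Monotone fun y => U x y) ∧
      (∀ y, Monotone fun x => U x y) ∧
      (0 : ℝ) < (t : ℝ) ∧ (t : ℝ) < 1 ∧
      (∀ x, U x t = x) ∧
      ∃ Res : unitInterval → unitInterval → unitInterval,
        (∀ x z v, U x v ≤ z ↔ v ≤ Res x z) ∧
        (∀ x, Res (Res x t) t = x) ∧
        Res t t = t) := by
  refine ⟨ooi (φ.symm 0), rfl, ?_⟩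
  set t := ooi (φ.symm 0) with htdef
  have ht : ((t:ℝ)) ∈ Set.Ioo (0:ℝ) 1 := ooi_mem _
  have ht0 : (t:ℝ) ≠ 0 := ht.1.ne'
  have ht1 : (t:ℝ) ≠ 1 := ht.2.ne
  have hphit : ∀ h : (t:ℝ) ∈ Set.Ioo (0:ℝ) 1, φ ⟨(t:ℝ), h⟩ = 0 := by
    intro h
    have he : (⟨(t:ℝ), h⟩ : Set.Ioo (0:ℝ) 1) = φ.symm 0 := Subtype.ext rfl
    rw [he, OrderIso.apply_symm_apply]
  refine ⟨U_comm φ U h0 h1 hmid, U_assoc φ U h0 h1 hmid,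
    fun x a b hab => U_mono φ U h0 h1 hmid x a b hab,
    fun y a b hab => ?_, ht.1, ht.2, ?_, myRes φ, U_galois φ U h0 h1 hmid, ?_, ?_⟩
  · show U a y ≤ U b y
    rw [U_comm φ U h0 h1 hmid a y, U_comm φ U h0 h1 hmid b y]
    exact U_mono φ U h0 h1 hmid y a b hab
  · intro x
    rcases tri x with hx|hx|hx
    · rw [U_zl U h0 x t hx]; exact (Subtype.ext hx).symm
    · rw [U_ol U h1 x t (by rw [hx]; norm_num) ht0 hx]; exact (Subtype.ext hx).symm
    · rw [U_int φ U hmid x t hx ht, hphit ht, add_zero, OrderIso.symm_apply_apply]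
      exact Subtype.ext rfl
  · intro x
    rcases tri x with hx|hx|hx
    · rw [res_zero φ x t hx, res_one φ 1 t rfl ht1]
      exact (Subtype.ext hx).symm
    · rw [res_one φ x t hx ht1, res_zero φ 0 t rfl]
      exact (Subtype.ext hx).symm
    · rw [res_int φ x t hx ht]
      have hmem := ooi_mem (φ.symm (φ ⟨(t:ℝ), ht⟩ - φ ⟨(x:ℝ), hx⟩))
      rw [res_int φ _ t hmem ht]
      have h2 : φ ⟨((ooi (φ.symm (φ ⟨(t:ℝ), ht⟩ - φ ⟨(x:ℝ), hx⟩)) : unitInterval) : ℝ), hmem⟩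
          = φ ⟨(t:ℝ), ht⟩ - φ ⟨(x:ℝ), hx⟩ := by
        have he : (⟨((ooi (φ.symm (φ ⟨(t:ℝ), ht⟩ - φ ⟨(x:ℝ), hx⟩)) : unitInterval) : ℝ), hmem⟩
            : Set.Ioo (0:ℝ) 1) = φ.symm (φ ⟨(t:ℝ), ht⟩ - φ ⟨(x:ℝ), hx⟩) := Subtype.ext rfl
        rw [he, OrderIso.apply_symm_apply]
      rw [h2, hphit ht]
      have h3 : (0:ℝ) - (0 - φ ⟨(x:ℝ), hx⟩) = φ ⟨(x:ℝ), hx⟩ := by ring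
      rw [h3, OrderIso.symm_apply_apply]
      exact Subtype.ext rfl
  · rw [res_int φ t t ht ht, sub_self]

/-- if `φ : (0,1) → ℝ` is an order isomorphism and `U` is defined by
`U(x,y) = φ⁻¹(φ(x)+φ(y))` on `(0,1)²`, `U(x,y) = 0` if `min(x,y) = 0`, and `U(x,y) = 1`
if `x ≠ 0 ≠ y` and `max(x,y) = 1`, then `U` is a group-like uninorm with unit `φ⁻¹(0)`. -/
theorem stmt_8 (φ : Set.Ioo (0 : ℝ) 1 ≃o ℝ)
    (U : unitInterval → unitInterval → unitInterval)
    (h0 : ∀ x y : unitInterval, min (x : ℝ) (y : ℝ) = 0 → U x y = 0)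
    (h1 : ∀ x y : unitInterval, (x : ℝ) ≠ 0 → (y : ℝ) ≠ 0 → max (x : ℝ) (y : ℝ) = 1 →
      U x y = 1)
    (hmid : ∀ (x y : unitInterval) (hx : (x : ℝ) ∈ Set.Ioo (0 : ℝ) 1)
      (hy : (y : ℝ) ∈ Set.Ioo (0 : ℝ) 1),
      (U x y : ℝ) = (φ.symm (φ ⟨(x : ℝ), hx⟩ + φ ⟨(y : ℝ), hy⟩) : ℝ)) :
    ∃ t : unitInterval, (t : ℝ) = (φ.symm 0 : ℝ) ∧ IsGroupLikeUninorm U t := by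
  obtain ⟨t, h, rest⟩ := stmt_8' φ U h0 h1 hmid
  exact ⟨t, h, rest⟩
end

section
/- Let A and L be linear orders, let H be a nonempty subset of A, and let G be a subset of L. Let C = {(a, y) ∈ A ×ₗ WithBot (WithTop L) : a ∈ H or y = ⊥} with the induced order, and let C' = {(a, y) ∈ C : a ∈ H and y is an element of L belonging to G}. Then C' is discretely embedded into C if and only if G is discretely embedded into L. -/
/-- `Z` is discretely embedded into `X`: every `x ∈ Z` has a predecessor and a successor
in `X`, and both belong to `Z`. -/
def DiscretelyEmbedded {X : Type*} [LinearOrder X] (Z : Set X) : Prop :=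
  ∀ x ∈ Z, (∃ p, p < x ∧ (∀ y, y < x → y ≤ p) ∧ p ∈ Z) ∧
           (∃ s, x < s ∧ (∀ y, x < y → s ≤ y) ∧ s ∈ Z)

private lemma aux_pred_le {L : Type*} [LinearOrder L] {l p : L} (h : ∀ m, m < l → m ≤ p) :
    ∀ y : WithBot (WithTop L), y < ((l : WithTop L) : WithBot (WithTop L)) →
      y ≤ ((p : WithTop L) : WithBot (WithTop L)) := by
  intro y hy
  induction y using WithBot.recBotCoe with
  | bot => exact bot_le
  | coe z =>
    induction z using WithTop.recTopCoe with
    | top => exact absurd (WithBot.coe_lt_coe.mp hy) not_top_lt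
    | coe m =>
      exact WithBot.coe_le_coe.mpr (WithTop.coe_le_coe.mpr
        (h m (WithTop.coe_lt_coe.mp (WithBot.coe_lt_coe.mp hy))))

private lemma aux_succ_le {L : Type*} [LinearOrder L] {l s : L} (h : ∀ m, l < m → s ≤ m) :
    ∀ y : WithBot (WithTop L), ((l : WithTop L) : WithBot (WithTop L)) < y →
      ((s : WithTop L) : WithBot (WithTop L)) ≤ y := by
  intro y hy
  induction y using WithBot.recBotCoe with
  | bot => exact absurd hy (by simp)
  | coe z =>
    induction z using WithTop.recTopCoe with
    | top => exact WithBot.coe_le_coe.mpr le_top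
    | coe m =>
      exact WithBot.coe_le_coe.mpr (WithTop.coe_le_coe.mpr
        (h m (WithTop.coe_lt_coe.mp (WithBot.coe_lt_coe.mp hy))))

/-- with `C = {(a,y) ∈ A ×ₗ WithBot (WithTop L) : a ∈ H ∨ y = ⊥}` and
`C' = {(a,y) ∈ C : a ∈ H ∧ y ∈ L ∧ y ∈ G}`, the set `C'` is discretely embedded into `C`
iff `G` is discretely embedded into `L`. -/
theorem stmt_10 {A L : Type*} [LinearOrder A] [LinearOrder L]
    (H : Set A) (hH : H.Nonempty) (G : Set L) :
    DiscretelyEmbedded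
      {c : {p : A ×ₗ WithBot (WithTop L) // (ofLex p).1 ∈ H ∨ (ofLex p).2 = ⊥} |
        (ofLex c.val).1 ∈ H ∧
          ∃ l ∈ G, (ofLex c.val).2 = ((l : WithTop L) : WithBot (WithTop L))} ↔
      DiscretelyEmbedded G := by
  constructor
  · -- C' discretely embedded → G discretely embedded
    intro hC' l hl
    obtain ⟨a, haH⟩ := hH
    set c : {p : A ×ₗ WithBot (WithTop L) // (ofLex p).1 ∈ H ∨ (ofLex p).2 = ⊥} :=
      ⟨toLex (a, ((l : WithTop L) : WithBot (WithTop L))), Or.inl haH⟩ with hcdef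
    have hc : c ∈ {c : {p : A ×ₗ WithBot (WithTop L) // (ofLex p).1 ∈ H ∨ (ofLex p).2 = ⊥} |
        (ofLex c.val).1 ∈ H ∧
          ∃ l ∈ G, (ofLex c.val).2 = ((l : WithTop L) : WithBot (WithTop L))} :=
      ⟨haH, l, hl, rfl⟩
    obtain ⟨⟨p', hp'lt, hp'max, hp'H, p, hpG, hp'eq⟩, ⟨s', hs'lt, hs'min, hs'H, s, hsG, hs'eq⟩⟩ :=
      hC' c hc
    have hp'val : p'.val = toLex ((ofLex p'.val).1, ((p : WithTop L) : WithBot (WithTop L))) :=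
      Prod.ext rfl hp'eq
    have hs'val : s'.val = toLex ((ofLex s'.val).1, ((s : WithTop L) : WithBot (WithTop L))) :=
      Prod.ext rfl hs'eq
    -- first coordinates equal a
    have hpa : (ofLex p'.val).1 = a := by
      rcases Prod.Lex.lt_iff.mp hp'lt with h | h
      · exfalso
        have hb : (⟨toLex (a, (⊥ : WithBot (WithTop L))), Or.inr rfl⟩ :
            {p : A ×ₗ WithBot (WithTop L) // (ofLex p).1 ∈ H ∨ (ofLex p).2 = ⊥}) < c := by
          refine Prod.Lex.lt_iff.mpr (Or.inr ⟨rfl, ?_⟩)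
          exact WithBot.bot_lt_coe _
        have := hp'max _ hb
        rcases Prod.Lex.le_iff.mp this with h2 | h2
        · exact absurd h2 (not_lt.mpr h.le)
        · exact absurd h2.1 h.ne'
      · exact h.1
    have hsa : (ofLex s'.val).1 = a := by
      rcases Prod.Lex.lt_iff.mp hs'lt with h | h
      · exfalso
        have hb : c < (⟨toLex (a, ((⊤ : WithTop L) : WithBot (WithTop L))), Or.inl haH⟩ :
            {p : A ×ₗ WithBot (WithTop L) // (ofLex p).1 ∈ H ∨ (ofLex p).2 = ⊥}) := by
          refine Prod.Lex.lt_iff.mpr (Or.inr ⟨rfl, ?_⟩)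
          exact WithBot.coe_lt_coe.mpr (WithTop.coe_lt_top l)
        have := hs'min _ hb
        rcases Prod.Lex.le_iff.mp this with h2 | h2
        · exact absurd h2 (not_lt.mpr h.le)
        · exact absurd h2.1 h.ne'
      · exact h.1.symm
    constructor
    · refine ⟨p, ?_, ?_, hpG⟩
      · rcases Prod.Lex.lt_iff.mp hp'lt with h | h
        · exact absurd h (by rw [show (ofLex p'.val).1 = a from hpa]; exact lt_irrefl a)
        · have := h.2
          rw [show (ofLex p'.val).2 = ((p : WithTop L) : WithBot (WithTop L)) from hp'eq] at this
          exact WithTop.coe_lt_coe.mp (WithBot.coe_lt_coe.mp this)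
      · intro m hm
        have hlt : (⟨toLex (a, ((m : WithTop L) : WithBot (WithTop L))), Or.inl haH⟩ :
            {p : A ×ₗ WithBot (WithTop L) // (ofLex p).1 ∈ H ∨ (ofLex p).2 = ⊥}) < c :=
          Prod.Lex.lt_iff.mpr (Or.inr ⟨rfl, WithBot.coe_lt_coe.mpr
            (WithTop.coe_lt_coe.mpr hm)⟩)
        have := hp'max _ hlt
        rcases Prod.Lex.le_iff.mp this with h2 | h2
        · exact absurd h2 (by rw [show (ofLex p'.val).1 = a from hpa]; exact lt_irrefl a)
        · have := h2.2
          rw [show (ofLex p'.val).2 = ((p : WithTop L) : WithBot (WithTop L)) from hp'eq] at this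
          exact WithTop.coe_le_coe.mp (WithBot.coe_le_coe.mp this)
    · refine ⟨s, ?_, ?_, hsG⟩
      · rcases Prod.Lex.lt_iff.mp hs'lt with h | h
        · exact absurd h (by rw [show (ofLex s'.val).1 = a from hsa]; exact lt_irrefl a)
        · have := h.2
          rw [show (ofLex s'.val).2 = ((s : WithTop L) : WithBot (WithTop L)) from hs'eq] at this
          exact WithTop.coe_lt_coe.mp (WithBot.coe_lt_coe.mp this)
      · intro m hm
        have hlt : c < (⟨toLex (a, ((m : WithTop L) : WithBot (WithTop L))), Or.inl haH⟩ :
            {p : A ×ₗ WithBot (WithTop L) // (ofLex p).1 ∈ H ∨ (ofLex p).2 = ⊥}) :=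
          Prod.Lex.lt_iff.mpr (Or.inr ⟨rfl, WithBot.coe_lt_coe.mpr
            (WithTop.coe_lt_coe.mpr hm)⟩)
        have := hs'min _ hlt
        rcases Prod.Lex.le_iff.mp this with h2 | h2
        · exact absurd h2 (by rw [show (ofLex s'.val).1 = a from hsa]; exact lt_irrefl a)
        · have := h2.2
          rw [show (ofLex s'.val).2 = ((s : WithTop L) : WithBot (WithTop L)) from hs'eq] at this
          exact WithTop.coe_le_coe.mp (WithBot.coe_le_coe.mp this)
  · -- G discretely embedded → C' discretely embedded
    intro hG c hc
    obtain ⟨haH, l, hlG, heq⟩ := hc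
    set a := (ofLex c.val).1 with hadef
    have hcval : c.val = toLex (a, ((l : WithTop L) : WithBot (WithTop L))) :=
      Prod.ext rfl heq
    obtain ⟨⟨p, hpl, hpmax, hpG⟩, ⟨s, hls, hsmin, hsG⟩⟩ := hG l hlG
    constructor
    · refine ⟨⟨toLex (a, ((p : WithTop L) : WithBot (WithTop L))), Or.inl haH⟩, ?_, ?_, ?_⟩
      · show toLex (a, _) < c.val
        rw [hcval]
        exact Prod.Lex.lt_iff.mpr (Or.inr ⟨rfl, WithBot.coe_lt_coe.mpr
          (WithTop.coe_lt_coe.mpr hpl)⟩)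
      · intro y hy
        have hy' : y.val < c.val := hy
        rw [hcval] at hy'
        show y.val ≤ toLex (a, _)
        rcases Prod.Lex.lt_iff.mp hy' with h | h
        · exact Prod.Lex.le_iff.mpr (Or.inl h)
        · exact Prod.Lex.le_iff.mpr (Or.inr ⟨h.1, aux_pred_le hpmax _ h.2⟩)
      · exact ⟨haH, p, hpG, rfl⟩
    · refine ⟨⟨toLex (a, ((s : WithTop L) : WithBot (WithTop L))), Or.inl haH⟩, ?_, ?_, ?_⟩
      · show c.val < toLex (a, _)
        rw [hcval]
        exact Prod.Lex.lt_iff.mpr (Or.inr ⟨rfl, WithBot.coe_lt_coe.mpr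
          (WithTop.coe_lt_coe.mpr hls)⟩)
      · intro y hy
        have hy' : c.val < y.val := hy
        rw [hcval] at hy'
        show toLex (a, _) ≤ y.val
        rcases Prod.Lex.lt_iff.mp hy' with h | h
        · exact Prod.Lex.le_iff.mpr (Or.inl h)
        · exact Prod.Lex.le_iff.mpr (Or.inr ⟨h.1, aux_succ_le hsmin _ h.2⟩)
      · exact ⟨haH, s, hsG, rfl⟩
end

section
/- Let A, L, B be linear orders with B nonempty, let H be a nonempty subset of A and G a nonempty subset of L. Let C = {(a, y) ∈ A ×ₗ WithBot (WithTop L) : a ∈ H or y = ⊥} with the induced order, let C' = {(a, y) ∈ C : a ∈ H and y is an element of L belonging to G}, and let D = {(c, z) ∈ C ×ₗ WithTop B : c ∈ C' or z = ⊤} with the induced order. Then the following are equivalent: (1) C' is discretely embedded into C and D is order-isomorphic to ℝ; (2) A is order-isomorphic to ℝ, B is order-isomorphic to ℝ, H and G are countable, L is Dedekind complete, L has a countable dense subset, L has neither a least nor a greatest element, G is discretely embedded into L, and there exist no two elements x < y of L ∖ G with no element of L strictly between them. -/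
/-- The universe `C = {(a,y) ∈ A ×ₗ WithBot (WithTop L) : a ∈ H ∨ y = ⊥}` of the type I
partial lexicographic product, with the induced order. -/
abbrev PLP1 (A L : Type*) [LinearOrder A] [LinearOrder L] (H : Set A) : Type _ :=
  {p : A ×ₗ WithBot (WithTop L) // (ofLex p).1 ∈ H ∨ (ofLex p).2 = ⊥}

/-- The subset `C' = {(a,y) ∈ C : a ∈ H ∧ y ∈ L ∧ y ∈ G}` of `C = PLP1 A L H`. -/
def PLP1core {A L : Type*} [LinearOrder A] [LinearOrder L] (H : Set A) (G : Set L) :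
    Set (PLP1 A L H) :=
  {c | (ofLex c.val).1 ∈ H ∧ ∃ l ∈ G, (ofLex c.val).2 = ((l : WithTop L) : WithBot (WithTop L))}

section RChar
variable {X : Type*} [LinearOrder X]

theorem real_char_rev
    (hdense : DenselyOrdered X) (hcomp : ∀ S : Set X, S.Nonempty → BddAbove S → ∃ m, IsLUB S m)
    (x₀ : X) (hmin : NoMinOrder X) (hmax : NoMaxOrder X)
    (Q : Set X) (hQc : Q.Countable) (hQd : ∀ x y : X, x < y → ∃ q ∈ Q, x ≤ q ∧ q ≤ y) :
    Nonempty (X ≃o ℝ) := by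
  -- between any x < y there is q ∈ Q with x < q < y? no: weak. Derive helper:
  have key : ∀ x y : X, x < y → ∃ q ∈ Q, x < q ∧ q < y := by
    intro x y hxy
    obtain ⟨a, hxa, hay⟩ := exists_between hxy
    obtain ⟨b, hab, hby⟩ := exists_between hay
    obtain ⟨q, hqQ, haq, hqb⟩ := hQd a b hab
    exact ⟨q, hqQ, hxa.trans_le haq, hqb.trans_lt hby⟩
  have exists_gtQ : ∀ x : X, ∃ q ∈ Q, x < q := by
    intro x
    obtain ⟨y, hy⟩ := exists_gt x
    obtain ⟨q, hqQ, h1, _⟩ := key x y hy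
    exact ⟨q, hqQ, h1⟩
  have exists_ltQ : ∀ x : X, ∃ q ∈ Q, q < x := by
    intro x
    obtain ⟨y, hy⟩ := exists_lt x
    obtain ⟨q, hqQ, _, h2⟩ := key y x hy
    exact ⟨q, hqQ, h2⟩
  -- subtype instances
  haveI : Countable Q := hQc.to_subtype
  haveI : DenselyOrdered Q := ⟨by
    rintro ⟨a, ha⟩ ⟨b, hb⟩ hab
    obtain ⟨q, hqQ, h1, h2⟩ := key a b hab
    exact ⟨⟨q, hqQ⟩, h1, h2⟩⟩
  haveI : NoMinOrder Q := ⟨by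
    rintro ⟨a, ha⟩
    obtain ⟨q, hqQ, h⟩ := exists_ltQ a
    exact ⟨⟨q, hqQ⟩, h⟩⟩
  haveI : NoMaxOrder Q := ⟨by
    rintro ⟨a, ha⟩
    obtain ⟨q, hqQ, h⟩ := exists_gtQ a
    exact ⟨⟨q, hqQ⟩, h⟩⟩
  haveI : Nonempty Q := by
    obtain ⟨q, hqQ, _⟩ := exists_gtQ x₀
    exact ⟨⟨q, hqQ⟩⟩
  obtain ⟨ψ⟩ : Nonempty (Q ≃o ℚ) := Order.iso_of_countable_dense Q ℚ
  -- define f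
  set img : X → Set ℝ := fun x => (fun q : Q => ((ψ q : ℚ) : ℝ)) '' {q : Q | (q : X) ≤ x} with himg
  have himg_ne : ∀ x, (img x).Nonempty := by
    intro x
    obtain ⟨y, hy⟩ := exists_lt x
    obtain ⟨q, hqQ, _, h2⟩ := key y x hy
    exact ⟨_, ⟨⟨q, hqQ⟩, h2.le, rfl⟩⟩
  have himg_bdd : ∀ x, BddAbove (img x) := by
    intro x
    obtain ⟨q₀, hq₀Q, hq₀⟩ := exists_gtQ x
    refine ⟨((ψ ⟨q₀, hq₀Q⟩ : ℚ) : ℝ), ?_⟩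
    rintro _ ⟨q, hq, rfl⟩
    have : q < ⟨q₀, hq₀Q⟩ := Subtype.coe_lt_coe.mp (lt_of_le_of_lt (hq : (q : X) ≤ x) hq₀)
    show ((ψ q : ℚ) : ℝ) ≤ _
    exact_mod_cast (ψ.strictMono this).le
  set f : X → ℝ := fun x => sSup (img x) with hf
  have hmono : StrictMono f := by
    intro x y hxy
    obtain ⟨q1, hq1Q, hxq1, hq1y⟩ := key x y hxy
    obtain ⟨q2, hq2Q, hq12, hq2y⟩ := key q1 y hq1y
    have h1 : f x ≤ ((ψ ⟨q1, hq1Q⟩ : ℚ) : ℝ) := by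
      apply csSup_le (himg_ne x)
      rintro _ ⟨q, hq, rfl⟩
      have : q < ⟨q1, hq1Q⟩ := Subtype.coe_lt_coe.mp (lt_of_le_of_lt (hq : (q : X) ≤ x) hxq1)
      show ((ψ q : ℚ) : ℝ) ≤ _
      exact_mod_cast (ψ.strictMono this).le
    have h2 : ((ψ ⟨q2, hq2Q⟩ : ℚ) : ℝ) ≤ f y :=
      le_csSup (himg_bdd y) ⟨⟨q2, hq2Q⟩, hq2y.le, rfl⟩
    have h12 : ((ψ ⟨q1, hq1Q⟩ : ℚ) : ℝ) < ((ψ ⟨q2, hq2Q⟩ : ℚ) : ℝ) := by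
      exact_mod_cast ψ.strictMono (show (⟨q1, hq1Q⟩ : Q) < ⟨q2, hq2Q⟩ from hq12)
    calc f x ≤ _ := h1
      _ < _ := h12
      _ ≤ f y := h2
  have hsurj : Function.Surjective f := by
    intro r
    set S : Set X := (fun q : Q => (q : X)) '' {q : Q | ((ψ q : ℚ) : ℝ) < r} with hS
    have hSne : S.Nonempty := by
      obtain ⟨s, hs⟩ := exists_rat_lt r
      exact ⟨_, ⟨ψ.symm s, by simp [hs], rfl⟩⟩
    have hSbdd : BddAbove S := by
      obtain ⟨s, hs⟩ := exists_rat_gt r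
      refine ⟨(ψ.symm s : X), ?_⟩
      rintro _ ⟨q, hq, rfl⟩
      have : q < ψ.symm s := by
        have : (ψ q : ℝ) < (s : ℝ) := hq.trans hs
        have h2 : ψ q < s := by exact_mod_cast this
        simpa using ψ.strictMono.lt_iff_lt.mp (by simpa using h2)
      exact this.le
    obtain ⟨x, hx⟩ := hcomp S hSne hSbdd
    refine ⟨x, ?_⟩
    have hub : ∀ s : ℚ, (s : ℝ) > r → ∀ y ∈ S, y ≤ (ψ.symm s : X) := by
      intro s hs y hy
      obtain ⟨q, hq, rfl⟩ := hy
      have h2 : ψ q < s := by exact_mod_cast lt_trans hq hs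
      have : q < ψ.symm s := by
        simpa using ψ.strictMono.lt_iff_lt.mp (by simpa using h2)
      exact this.le
    have hle : f x ≤ r := by
      apply csSup_le (himg_ne x)
      rintro _ ⟨q, hq, rfl⟩
      by_contra hcon
      push_neg at hcon
      obtain ⟨s, hs1, hs2⟩ := exists_rat_btwn hcon
      have hxle : x ≤ (ψ.symm s : X) := hx.2 (hub s hs1 )
      have hqs : (ψ.symm s : Q) < q := by
        have : s < ψ q := by exact_mod_cast hs2
        simpa using ψ.strictMono.lt_iff_lt.mp (by simpa using this)
      have : (ψ.symm s : X) < (q : X) := hqs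
      exact absurd ((hq : (q:X) ≤ x).trans hxle) (not_le.mpr this)
    have hge : r ≤ f x := by
      by_contra hcon
      push_neg at hcon
      obtain ⟨s, hs1, hs2⟩ := exists_rat_btwn hcon
      have hmem : (ψ.symm s : X) ∈ S := ⟨ψ.symm s, by simp [hs2], rfl⟩
      have : ((ψ (ψ.symm s) : ℚ) : ℝ) ≤ f x :=
        le_csSup (himg_bdd x) ⟨ψ.symm s, hx.1 hmem, rfl⟩
      rw [ψ.apply_symm_apply] at this
      exact absurd this (not_le.mpr hs1)
    exact le_antisymm hle hge
  exact ⟨StrictMono.orderIsoOfSurjective f hmono hsurj⟩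

end RChar

section RChar
variable {X : Type*} [LinearOrder X]

/-- countable weak order-dense subset -/
def WeakSep (X : Type*) [LinearOrder X] : Prop :=
  ∃ Q : Set X, Q.Countable ∧ ∀ x y : X, x < y → ∃ q ∈ Q, x ≤ q ∧ q ≤ y

theorem real_char :
    Nonempty (X ≃o ℝ) ↔
      (Nonempty X ∧ DenselyOrdered X ∧ NoMinOrder X ∧ NoMaxOrder X ∧
       (∀ S : Set X, S.Nonempty → BddAbove S → ∃ m, IsLUB S m) ∧ WeakSep X) := by
  constructor
  · rintro ⟨e⟩
    refine ⟨⟨e.symm 0⟩, ⟨fun x y hxy => ?_⟩, ⟨fun x => ?_⟩, ⟨fun x => ?_⟩, fun S hS hbdd => ?_, ?_⟩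
    · obtain ⟨r, hr1, hr2⟩ := exists_between (e.strictMono hxy)
      exact ⟨e.symm r, by simpa using (e.symm.strictMono hr1), by simpa using e.symm.strictMono hr2⟩
    · exact ⟨e.symm (e x - 1), by simpa using e.symm.strictMono (by linarith : e x - 1 < e x)⟩
    · exact ⟨e.symm (e x + 1), by simpa using e.symm.strictMono (by linarith : e x < e x + 1)⟩
    · refine ⟨e.symm (sSup (e '' S)), ?_⟩
      have : IsLUB (e '' S) (sSup (e '' S)) :=
        Real.isLUB_sSup (hS.image e) (e.monotone.map_bddAbove hbdd)
      exact (OrderIso.isLUB_image e).mp (by simpa using this)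
    · refine ⟨Set.range (fun q : ℚ => e.symm q), Set.countable_range _, fun x y hxy => ?_⟩
      obtain ⟨q, hq1, hq2⟩ := exists_rat_btwn (e.strictMono hxy)
      exact ⟨e.symm q, ⟨q, rfl⟩, by simpa using (e.symm.strictMono hq1).le, by simpa using (e.symm.strictMono hq2).le⟩
  · rintro ⟨⟨x₀⟩, hdense, hmin, hmax, hcomp, Q, hQc, hQd⟩
    exact real_char_rev hdense hcomp x₀ hmin hmax Q hQc hQd

end RChar

theorem dense_order_iff {X : Type*} [LinearOrder X]
    (hmin : ∀ x : X, ∃ y, y < x) (hmax : ∀ x : X, ∃ y, x < y) (Q : Set X) :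
    @Dense X (Preorder.topology X) Q ↔ ∀ x a b : X, a < x → x < b → ∃ q ∈ Q, a < q ∧ q < b := by
  letI : TopologicalSpace X := Preorder.topology X
  haveI : OrderTopology X := ⟨rfl⟩
  constructor
  · intro hd x a b hax hxb
    have h1 : Set.Ioo a b ∈ nhds x := Ioo_mem_nhds hax hxb
    obtain ⟨q, hq1, hq2⟩ := (mem_closure_iff_nhds.mp (hd x) _ h1)
    exact ⟨q, hq2, hq1.1, hq1.2⟩
  · intro h x
    apply mem_closure_iff_nhds.mpr
    intro s hs
    obtain ⟨l, u, hx, hsub⟩ := (mem_nhds_iff_exists_Ioo_subset' (hmin x) (hmax x)).mp hs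
    obtain ⟨q, hqQ, h1, h2⟩ := h x l u hx.1 hx.2
    exact ⟨q, hsub ⟨h1, h2⟩, hqQ⟩

set_option linter.unusedSectionVars false


section Main
variable {A L B : Type*} [LinearOrder A] [LinearOrder L] [LinearOrder B]

variable (L) in
abbrev WW := WithBot (WithTop L)

variable (L) in
def wl (l : L) : WW L := ((l : WithTop L) : WW L)

variable (L) in
def wt : WW L := ((⊤ : WithTop L) : WW L)

variable (A L B) in
abbrev DD (H : Set A) (G : Set L) : Type _ :=
  {q : PLP1 A L H ×ₗ WithTop B // (ofLex q).1 ∈ PLP1core H G ∨ (ofLex q).2 = ⊤}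

variable {H : Set A} {G : Set L}

def mkC (a : A) (y : WW L) (h : a ∈ H ∨ y = ⊥) : PLP1 A L H := ⟨toLex (a, y), h⟩

abbrev CoreCond (G : Set L) (a : A) (y : WW L) (z : WithTop B) : Prop :=
  (a ∈ H ∧ ∃ l ∈ G, y = wl L l) ∨ z = ⊤

def mkD (a : A) (y : WW L) (z : WithTop B) (h : a ∈ H ∨ y = ⊥)
    (h2 : CoreCond (H := H) G a y z) : DD A L B H G :=
  ⟨toLex (mkC a y h, z), by
    rcases h2 with h2 | h2
    · exact Or.inl ⟨h2.1, h2.2⟩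
    · exact Or.inr h2⟩

variable {a₁ a₂ : A} {y₁ y₂ : WW L} {z₁ z₂ : WithTop B}

lemma mkC_lt_mkC {h₁ : a₁ ∈ H ∨ y₁ = ⊥} {h₂ : a₂ ∈ H ∨ y₂ = ⊥} :
    mkC a₁ y₁ h₁ < mkC a₂ y₂ h₂ ↔ a₁ < a₂ ∨ (a₁ = a₂ ∧ y₁ < y₂) :=
  Iff.trans (Subtype.coe_lt_coe (p := fun p : A ×ₗ WW L => (ofLex p).1 ∈ H ∨ (ofLex p).2 = ⊥)).symm
    (Prod.Lex.lt_iff (x := toLex (a₁, y₁)) (y := toLex (a₂, y₂)))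

lemma mkC_le_mkC {h₁ : a₁ ∈ H ∨ y₁ = ⊥} {h₂ : a₂ ∈ H ∨ y₂ = ⊥} :
    mkC a₁ y₁ h₁ ≤ mkC a₂ y₂ h₂ ↔ a₁ < a₂ ∨ (a₁ = a₂ ∧ y₁ ≤ y₂) :=
  Iff.trans (Subtype.coe_le_coe (p := fun p : A ×ₗ WW L => (ofLex p).1 ∈ H ∨ (ofLex p).2 = ⊥)).symm
    (Prod.Lex.le_iff (x := toLex (a₁, y₁)) (y := toLex (a₂, y₂)))

lemma mkC_inj {h₁ : a₁ ∈ H ∨ y₁ = ⊥} {h₂ : a₂ ∈ H ∨ y₂ = ⊥} :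
    mkC a₁ y₁ h₁ = mkC a₂ y₂ h₂ ↔ a₁ = a₂ ∧ y₁ = y₂ := by
  rw [Subtype.ext_iff]
  constructor
  · intro h
    have h' := congrArg ofLex h
    exact ⟨congrArg Prod.fst h', congrArg Prod.snd h'⟩
  · rintro ⟨rfl, rfl⟩; rfl

lemma mkD_lt_mkD {h₁ : a₁ ∈ H ∨ y₁ = ⊥} {h₂ : a₂ ∈ H ∨ y₂ = ⊥}
    {h₁' : CoreCond (H := H) G a₁ y₁ z₁} {h₂' : CoreCond (H := H) G a₂ y₂ z₂} :
    mkD a₁ y₁ z₁ h₁ h₁' < mkD a₂ y₂ z₂ h₂ h₂' ↔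
      a₁ < a₂ ∨ (a₁ = a₂ ∧ (y₁ < y₂ ∨ (y₁ = y₂ ∧ z₁ < z₂))) := by
  have h0 : mkD a₁ y₁ z₁ h₁ h₁' < mkD a₂ y₂ z₂ h₂ h₂' ↔
      toLex ((mkC a₁ y₁ h₁ : PLP1 A L H), z₁) < toLex ((mkC a₂ y₂ h₂ : PLP1 A L H), z₂) :=
    (Subtype.coe_lt_coe (p := fun q : PLP1 A L H ×ₗ WithTop B =>
      (ofLex q).1 ∈ PLP1core H G ∨ (ofLex q).2 = ⊤)).symm
  rw [h0, Prod.Lex.lt_iff]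
  simp only [ofLex_toLex, mkC_lt_mkC, mkC_inj]
  simp only [and_or_left, or_assoc, and_assoc]

lemma mkD_le_mkD {h₁ : a₁ ∈ H ∨ y₁ = ⊥} {h₂ : a₂ ∈ H ∨ y₂ = ⊥}
    {h₁' : CoreCond (H := H) G a₁ y₁ z₁} {h₂' : CoreCond (H := H) G a₂ y₂ z₂} :
    mkD a₁ y₁ z₁ h₁ h₁' ≤ mkD a₂ y₂ z₂ h₂ h₂' ↔
      a₁ < a₂ ∨ (a₁ = a₂ ∧ (y₁ < y₂ ∨ (y₁ = y₂ ∧ z₁ ≤ z₂))) := by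
  have h0 : mkD a₁ y₁ z₁ h₁ h₁' ≤ mkD a₂ y₂ z₂ h₂ h₂' ↔
      toLex ((mkC a₁ y₁ h₁ : PLP1 A L H), z₁) ≤ toLex ((mkC a₂ y₂ h₂ : PLP1 A L H), z₂) :=
    (Subtype.coe_le_coe (p := fun q : PLP1 A L H ×ₗ WithTop B =>
      (ofLex q).1 ∈ PLP1core H G ∨ (ofLex q).2 = ⊤)).symm
  rw [h0, Prod.Lex.le_iff]
  simp only [ofLex_toLex, mkC_lt_mkC, mkC_inj]
  simp only [and_or_left, or_assoc, and_assoc]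

lemma mkD_inj {h₁ : a₁ ∈ H ∨ y₁ = ⊥} {h₂ : a₂ ∈ H ∨ y₂ = ⊥}
    {h₁' : CoreCond (H := H) G a₁ y₁ z₁} {h₂' : CoreCond (H := H) G a₂ y₂ z₂} :
    mkD a₁ y₁ z₁ h₁ h₁' = mkD a₂ y₂ z₂ h₂ h₂' ↔ a₁ = a₂ ∧ y₁ = y₂ ∧ z₁ = z₂ := by
  rw [Subtype.ext_iff]
  constructor
  · intro h
    have h' := congrArg ofLex h
    have hc := congrArg Prod.fst h'
    have hz := congrArg Prod.snd h'
    exact ⟨(mkC_inj.mp hc).1, (mkC_inj.mp hc).2, hz⟩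
  · rintro ⟨rfl, rfl, rfl⟩; rfl

lemma C_cases (c : PLP1 A L H) : ∃ (a : A) (y : WW L) (h : a ∈ H ∨ y = ⊥), c = mkC a y h := by
  obtain ⟨p, hp⟩ := c
  exact ⟨(ofLex p).1, (ofLex p).2, hp, rfl⟩

lemma mkC_mem_core {a : A} {y : WW L} {h : a ∈ H ∨ y = ⊥} :
    mkC a y h ∈ PLP1core H G ↔ a ∈ H ∧ ∃ l ∈ G, y = wl L l := Iff.rfl

lemma D_cases (d : DD A L B H G) : ∃ (a : A) (y : WW L) (z : WithTop B)
    (h : a ∈ H ∨ y = ⊥) (h2 : CoreCond (H := H) G a y z), d = mkD a y z h h2 := by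
  obtain ⟨q, hq⟩ := d
  obtain ⟨a, y, h, hc⟩ := C_cases (ofLex q).1
  have h2 : CoreCond (H := H) G a y (ofLex q).2 := by
    rcases hq with hq | hq
    · rw [hc] at hq
      exact Or.inl (mkC_mem_core.mp hq)
    · exact Or.inr hq
  refine ⟨a, y, (ofLex q).2, h, h2, ?_⟩
  apply Subtype.ext
  show q = toLex (mkC a y h, (ofLex q).2)
  rw [← hc]
  rfl

-- basic W facts
lemma wbot_lt_wl (l : L) : (⊥ : WW L) < wl L l := WithBot.bot_lt_coe _
lemma wl_lt_wt (l : L) : wl L l < wt L := WithBot.coe_lt_coe.mpr (WithTop.coe_lt_top l)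
lemma wbot_lt_wt : (⊥ : WW L) < wt L := WithBot.bot_lt_coe _
lemma wl_lt_wl {l₁ l₂ : L} : wl L l₁ < wl L l₂ ↔ l₁ < l₂ := by
  rw [wl, wl, WithBot.coe_lt_coe, WithTop.coe_lt_coe]
lemma wl_le_wl {l₁ l₂ : L} : wl L l₁ ≤ wl L l₂ ↔ l₁ ≤ l₂ := by
  rw [wl, wl, WithBot.coe_le_coe, WithTop.coe_le_coe]
lemma wl_inj {l₁ l₂ : L} : wl L l₁ = wl L l₂ ↔ l₁ = l₂ := by
  constructor
  · intro h; exact le_antisymm (wl_le_wl.mp h.le) (wl_le_wl.mp h.ge)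
  · rintro rfl; rfl
lemma W_trichotomy (y : WW L) : y = ⊥ ∨ y = wt L ∨ ∃ l, y = wl L l := by
  induction y using WithBot.recBotCoe with
  | bot => exact Or.inl rfl
  | coe x =>
    induction x using WithTop.recTopCoe with
    | top => exact Or.inr (Or.inl rfl)
    | coe l => exact Or.inr (Or.inr ⟨l, rfl⟩)
lemma le_wt (y : WW L) : y ≤ wt L := by
  rcases W_trichotomy y with rfl | rfl | ⟨l, rfl⟩
  · exact bot_le
  · exact le_refl _
  · exact (wl_lt_wt l).le
lemma wt_ne_wl (l : L) : wt L ≠ wl L l := ne_of_gt (wl_lt_wt l)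
lemma wbot_ne_wl (l : L) : (⊥ : WW L) ≠ wl L l := ne_of_lt (wbot_lt_wl l)
lemma wbot_ne_wt : (⊥ : WW L) ≠ wt (L := L) := ne_of_lt (wbot_lt_wt)

end Main

section Coords
variable {A L B : Type*} [LinearOrder A] [LinearOrder L] [LinearOrder B]
variable {H : Set A} {G : Set L}

def dA (d : DD A L B H G) : A := (ofLex (ofLex d.val).1.val).1
def dY (d : DD A L B H G) : WW L := (ofLex (ofLex d.val).1.val).2
def dZ (d : DD A L B H G) : WithTop B := (ofLex d.val).2

@[simp] lemma dA_mkD {a y z h h2} : dA (mkD (A := A) (L := L) (B := B) (H := H) (G := G) a y z h h2) = a := rfl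
@[simp] lemma dY_mkD {a y z h h2} : dY (mkD (A := A) (L := L) (B := B) (H := H) (G := G) a y z h h2) = y := rfl
@[simp] lemma dZ_mkD {a y z h h2} : dZ (mkD (A := A) (L := L) (B := B) (H := H) (G := G) a y z h h2) = z := rfl

lemma dmem1 (d : DD A L B H G) : dA d ∈ H ∨ dY d = ⊥ := by
  obtain ⟨a, y, z, h, h2, rfl⟩ := D_cases d
  simpa using h

lemma dmem2 (d : DD A L B H G) : (dA d ∈ H ∧ ∃ l ∈ G, dY d = wl L l) ∨ dZ d = ⊤ := by
  obtain ⟨a, y, z, h, h2, rfl⟩ := D_cases d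
  simpa [CoreCond] using h2

lemma D_le_iff (d₁ d₂ : DD A L B H G) :
    d₁ ≤ d₂ ↔ dA d₁ < dA d₂ ∨ (dA d₁ = dA d₂ ∧ (dY d₁ < dY d₂ ∨ (dY d₁ = dY d₂ ∧ dZ d₁ ≤ dZ d₂))) := by
  obtain ⟨a₁, y₁, z₁, h₁, h₁', rfl⟩ := D_cases d₁
  obtain ⟨a₂, y₂, z₂, h₂, h₂', rfl⟩ := D_cases d₂
  simp [mkD_le_mkD]

lemma D_lt_iff (d₁ d₂ : DD A L B H G) :
    d₁ < d₂ ↔ dA d₁ < dA d₂ ∨ (dA d₁ = dA d₂ ∧ (dY d₁ < dY d₂ ∨ (dY d₁ = dY d₂ ∧ dZ d₁ < dZ d₂))) := by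
  obtain ⟨a₁, y₁, z₁, h₁, h₁', rfl⟩ := D_cases d₁
  obtain ⟨a₂, y₂, z₂, h₂, h₂', rfl⟩ := D_cases d₂
  simp [mkD_lt_mkD]

lemma dA_mono {d₁ d₂ : DD A L B H G} (h : d₁ ≤ d₂) : dA d₁ ≤ dA d₂ := by
  rcases (D_le_iff d₁ d₂).mp h with h | ⟨h, -⟩
  · exact h.le
  · exact h.le

lemma dY_mono {d₁ d₂ : DD A L B H G} (h : d₁ ≤ d₂) (ha : dA d₁ = dA d₂) : dY d₁ ≤ dY d₂ := by
  rcases (D_le_iff d₁ d₂).mp h with h | ⟨-, h | ⟨h, -⟩⟩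
  · exact absurd ha h.ne
  · exact h.le
  · exact h.le

lemma dZ_mono {d₁ d₂ : DD A L B H G} (h : d₁ ≤ d₂) (ha : dA d₁ = dA d₂) (hy : dY d₁ = dY d₂) :
    dZ d₁ ≤ dZ d₂ := by
  rcases (D_le_iff d₁ d₂).mp h with h | ⟨-, h | ⟨-, h⟩⟩
  · exact absurd ha h.ne
  · exact absurd hy h.ne
  · exact h

end Coords

section Dir21
variable {A L B : Type*} [LinearOrder A] [LinearOrder L] [LinearOrder B]
variable {H : Set A} {G : Set L}

lemma coreCond_z_top {a : A} {y : WW L} {z : WithTop B}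
    (h2 : CoreCond (H := H) G a y z) (hy : ∀ l ∈ G, y ≠ wl L l) : z = ⊤ := by
  rcases h2 with ⟨_, l, hl, rfl⟩ | h2
  · exact absurd rfl (hy l hl)
  · exact h2

lemma D_dense
    (hAd : DenselyOrdered A) (hBd : DenselyOrdered B)
    (hBmin : NoMinOrder B) (hBmax : NoMaxOrder B)
    (hLmin : ∀ m : L, ∃ x, x < m) (hLmax : ∀ m : L, ∃ x, m < x)
    (hLne : Nonempty L) (hBne : Nonempty B)
    (hGd : DiscretelyEmbedded G)
    (hnogap : ¬∃ x y : L, x ∉ G ∧ y ∉ G ∧ x < y ∧ ¬∃ z, x < z ∧ z < y) :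
    DenselyOrdered (DD A L B H G) := by
  constructor
  intro d₁ d₂ hlt
  obtain ⟨a₁, y₁, z₁, h₁, h₁', rfl⟩ := D_cases d₁
  obtain ⟨a₂, y₂, z₂, h₂, h₂', rfl⟩ := D_cases d₂
  rw [mkD_lt_mkD] at hlt
  rcases hlt with hlt | ⟨rfl, hlt⟩
  · -- a₁ < a₂ : pick a between
    obtain ⟨a, ha1, ha2⟩ := exists_between hlt
    refine ⟨mkD a ⊥ ⊤ (Or.inr rfl) (Or.inr rfl), ?_, ?_⟩ <;> rw [mkD_lt_mkD]
    · exact Or.inl ha1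
    · exact Or.inl ha2
  rcases hlt with hlt | ⟨rfl, hlt⟩
  · -- same a, y₁ < y₂.  a ∈ H since y₂ ≠ ⊥
    have haH : a₁ ∈ H := by
      rcases h₂ with h | h
      · exact h
      · rw [h] at hlt; exact absurd hlt (not_lt_bot)
    rcases W_trichotomy y₁ with rfl | rfl | ⟨l₁, rfl⟩
    · -- y₁ = ⊥
      rcases W_trichotomy y₂ with rfl | rfl | ⟨l₂, rfl⟩
      · exact absurd hlt (lt_irrefl _)
      · -- y₂ = wt : pick any l
        obtain ⟨l⟩ := hLne
        refine ⟨mkD a₁ (wl L l) ⊤ (Or.inl haH) (Or.inr rfl), ?_, ?_⟩ <;> rw [mkD_lt_mkD]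
        · exact Or.inr ⟨rfl, Or.inl (wbot_lt_wl l)⟩
        · exact Or.inr ⟨rfl, Or.inl (wl_lt_wt l)⟩
      · -- y₂ = wl l₂ : L has no min
        obtain ⟨l, hl⟩ := hLmin l₂
        refine ⟨mkD a₁ (wl L l) ⊤ (Or.inl haH) (Or.inr rfl), ?_, ?_⟩ <;> rw [mkD_lt_mkD]
        · exact Or.inr ⟨rfl, Or.inl (wbot_lt_wl l)⟩
        · exact Or.inr ⟨rfl, Or.inl (wl_lt_wl.mpr hl)⟩
    · -- y₁ = wt : nothing above
      exact absurd hlt (not_lt.mpr (le_wt y₂))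
    · -- y₁ = wl l₁
      rcases W_trichotomy y₂ with rfl | rfl | ⟨l₂, rfl⟩
      · exact absurd hlt (not_lt.mpr bot_le)
      · -- y₂ = wt : L has no max
        obtain ⟨l, hl⟩ := hLmax l₁
        refine ⟨mkD a₁ (wl L l) ⊤ (Or.inl haH) (Or.inr rfl), ?_, ?_⟩ <;> rw [mkD_lt_mkD]
        · exact Or.inr ⟨rfl, Or.inl (wl_lt_wl.mpr hl)⟩
        · exact Or.inr ⟨rfl, Or.inl (wl_lt_wt l)⟩
      · -- y₂ = wl l₂, l₁ < l₂
        have hl12 : l₁ < l₂ := wl_lt_wl.mp hlt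
        by_cases hmid : ∃ l, l₁ < l ∧ l < l₂
        · obtain ⟨l, hl1, hl2⟩ := hmid
          refine ⟨mkD a₁ (wl L l) ⊤ (Or.inl haH) (Or.inr rfl), ?_, ?_⟩ <;> rw [mkD_lt_mkD]
          · exact Or.inr ⟨rfl, Or.inl (wl_lt_wl.mpr hl1)⟩
          · exact Or.inr ⟨rfl, Or.inl (wl_lt_wl.mpr hl2)⟩
        · -- adjacent
          by_cases hl₂G : l₂ ∈ G
          · -- insert below z₂ in the fibre of l₂
            induction z₂ using WithTop.recTopCoe with
            | top =>
              obtain ⟨b⟩ := hBne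
              refine ⟨mkD a₁ (wl L l₂) (b : WithTop B) (Or.inl haH)
                (Or.inl ⟨haH, l₂, hl₂G, rfl⟩), ?_, ?_⟩ <;> rw [mkD_lt_mkD]
              · exact Or.inr ⟨rfl, Or.inl hlt⟩
              · exact Or.inr ⟨rfl, Or.inr ⟨rfl, WithTop.coe_lt_top b⟩⟩
            | coe b₂ =>
              obtain ⟨b, hb⟩ := exists_lt b₂
              refine ⟨mkD a₁ (wl L l₂) (b : WithTop B) (Or.inl haH)
                (Or.inl ⟨haH, l₂, hl₂G, rfl⟩), ?_, ?_⟩ <;> rw [mkD_lt_mkD]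
              · exact Or.inr ⟨rfl, Or.inl hlt⟩
              · exact Or.inr ⟨rfl, Or.inr ⟨rfl, WithTop.coe_lt_coe.mpr hb⟩⟩
          · -- l₂ ∉ G, so l₁ ∈ G by no-gap, and l₂ = succ l₁ must be in G: contra
            have hl₁G : l₁ ∈ G := by
              by_contra hl₁G
              exact hnogap ⟨l₁, l₂, hl₁G, hl₂G, hl12, hmid⟩
            obtain ⟨-, s, hs1, hs2, hsG⟩ := hGd l₁ hl₁G
            have : s = l₂ := le_antisymm (hs2 l₂ hl12) (by
              by_contra hc
              push_neg at hc
              exact hmid ⟨s, hs1, hc⟩)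
            exact absurd (this ▸ hsG) hl₂G
  · -- same a, same y, z₁ < z₂ ; so y = wl g, g ∈ G
    have hcc := h₁'
    have hzne : z₁ ≠ ⊤ := ne_top_of_lt hlt
    have hcore : a₁ ∈ H ∧ ∃ l ∈ G, y₁ = wl L l := by
      rcases h₁' with h | h
      · exact h
      · exact absurd h hzne
    -- now z₁ = b₁ ∈ B
    induction z₁ using WithTop.recTopCoe with
    | top => exact absurd rfl hzne
    | coe b₁ =>
      induction z₂ using WithTop.recTopCoe with
      | top =>
        obtain ⟨b, hb⟩ := exists_gt b₁
        refine ⟨mkD a₁ y₁ (b : WithTop B) h₁ (Or.inl hcore), ?_, ?_⟩ <;> rw [mkD_lt_mkD]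
        · exact Or.inr ⟨rfl, Or.inr ⟨rfl, WithTop.coe_lt_coe.mpr hb⟩⟩
        · exact Or.inr ⟨rfl, Or.inr ⟨rfl, WithTop.coe_lt_top b⟩⟩
      | coe b₂ =>
        obtain ⟨b, hb1, hb2⟩ := exists_between (WithTop.coe_lt_coe.mp hlt)
        refine ⟨mkD a₁ y₁ (b : WithTop B) h₁ (Or.inl hcore), ?_, ?_⟩ <;> rw [mkD_lt_mkD]
        · exact Or.inr ⟨rfl, Or.inr ⟨rfl, WithTop.coe_lt_coe.mpr hb1⟩⟩
        · exact Or.inr ⟨rfl, Or.inr ⟨rfl, WithTop.coe_lt_coe.mpr hb2⟩⟩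

end Dir21

section Complete
variable {A L B : Type*} [LinearOrder A] [LinearOrder L] [LinearOrder B]
variable {H : Set A} {G : Set L}

lemma D_complete
    (hAc : ∀ S : Set A, S.Nonempty → BddAbove S → ∃ m, IsLUB S m)
    (hBc : ∀ S : Set B, S.Nonempty → BddAbove S → ∃ m, IsLUB S m)
    (hLc : ∀ S : Set L, S.Nonempty → BddAbove S → ∃ m, IsLUB S m)
    (hGd : DiscretelyEmbedded G) :
    ∀ S : Set (DD A L B H G), S.Nonempty → BddAbove S → ∃ m, IsLUB S m := by
  intro S hSne hSbdd
  obtain ⟨u, hu⟩ := hSbdd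
  -- the first-coordinate projection
  have hSA : (dA '' S).Nonempty := hSne.image _
  have hSAbdd : BddAbove (dA '' S) := ⟨dA u, by rintro _ ⟨d, hd, rfl⟩; exact dA_mono (hu hd)⟩
  obtain ⟨α, hα⟩ := hAc _ hSA hSAbdd
  by_cases hattain : ∃ d ∈ S, dA d = α
  case neg =>
    -- all elements have dA d < α ; lub is (α, ⊥, ⊤)
    have hstrict : ∀ d ∈ S, dA d < α := fun d hd =>
      lt_of_le_of_ne (hα.1 ⟨d, hd, rfl⟩) (fun h => hattain ⟨d, hd, h⟩)
    refine ⟨mkD α ⊥ ⊤ (Or.inr rfl) (Or.inr rfl), ?_, ?_⟩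
    · intro d hd
      rw [D_le_iff]
      exact Or.inl (by simpa using hstrict d hd)
    · intro w hw
      rw [D_le_iff]
      have hαw : α ≤ dA w := hα.2 (by rintro _ ⟨d, hd, rfl⟩; exact dA_mono (hw hd))
      rcases lt_or_eq_of_le hαw with h | h
      · exact Or.inl (by simpa using h)
      · refine Or.inr ⟨by simpa using h, ?_⟩
        rcases eq_or_lt_of_le (bot_le : (⊥ : WW L) ≤ dY w) with hy | hy
        · refine Or.inr ⟨by simpa using hy, ?_⟩
          rcases dmem2 w with ⟨-, l, -, hl⟩ | hz
          · rw [← hy] at hl; exact absurd hl (wbot_ne_wl l)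
          · simp [hz]
        · exact Or.inl (by simpa using hy)
  case pos =>
  -- fibre over α
  set S' : Set (DD A L B H G) := {d ∈ S | dA d = α} with hS'
  obtain ⟨d₀, hd₀S, hd₀A⟩ := hattain
  -- helper: any upper bound of S' is an upper bound of S
  have hubS' : ∀ w, (∀ d ∈ S', d ≤ w) → ∀ d ∈ S, d ≤ w := by
    intro w hw d hd
    by_cases hda : dA d = α
    · exact hw d ⟨hd, hda⟩
    · have h1 : dA d < α := lt_of_le_of_ne (hα.1 ⟨d, hd, rfl⟩) hda
      have h2 : d₀ ≤ w := hw d₀ ⟨hd₀S, hd₀A⟩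
      have : dA d < dA d₀ := by rw [hd₀A]; exact h1
      exact le_trans ((D_le_iff d d₀).mpr (Or.inl this)) h2
  by_cases htop : ∃ d ∈ S', dY d = wt L
  · -- max element (α, ⊤, ⊤)
    obtain ⟨dm, hdmS', hdmY⟩ := htop
    have hdmZ : dZ dm = ⊤ := by
      rcases dmem2 dm with ⟨-, l, -, hl⟩ | hz
      · rw [hdmY] at hl; exact absurd hl (wt_ne_wl l)
      · exact hz
    refine ⟨dm, ?_, fun w hw => hw hdmS'.1⟩
    intro d hd
    rw [D_le_iff]
    by_cases hda : dA d = α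
    · rcases eq_or_lt_of_le (le_wt (dY d)) with hy | hy
      · exact Or.inr ⟨by rw [hda, hdmS'.2], Or.inr ⟨by rw [hy, hdmY], by simp [hdmZ]⟩⟩
      · exact Or.inr ⟨by rw [hda, hdmS'.2], Or.inl (by rw [hdmY]; exact hy)⟩
    · exact Or.inl (by rw [hdmS'.2]; exact lt_of_le_of_ne (hα.1 ⟨d, hd, rfl⟩) hda)
  · -- no ⊤ in fibre
    have hYle : ∀ d ∈ S', dY d ≠ wt L := fun d hd h => htop ⟨d, hd, h⟩
    set T : Set L := {l | ∃ d ∈ S', dY d = wl L l} with hT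
    by_cases hTne : T.Nonempty
    case neg =>
      -- fibre is {⊥}; max element (α,⊥,⊤)
      have hbot : ∀ d ∈ S', dY d = ⊥ := by
        intro d hd
        rcases W_trichotomy (dY d) with h | h | ⟨l, h⟩
        · exact h
        · exact absurd h (hYle d hd)
        · exact absurd ⟨d, hd, h⟩ (fun hc => hTne ⟨l, hc⟩)
      have hd₀Y : dY d₀ = ⊥ := hbot d₀ ⟨hd₀S, hd₀A⟩
      have hd₀Z : dZ d₀ = ⊤ := by
        rcases dmem2 d₀ with ⟨-, l, -, hl⟩ | hz
        · rw [hd₀Y] at hl; exact absurd hl (wbot_ne_wl l)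
        · exact hz
      refine ⟨d₀, ?_, fun w hw => hw hd₀S⟩
      apply hubS'
      intro d hd
      rw [D_le_iff]
      exact Or.inr ⟨by rw [hd.2, hd₀A], Or.inr ⟨by rw [hbot d hd, hd₀Y],
        by rw [hd₀Z]; exact le_top⟩⟩
    case pos =>
    -- α ∈ H
    have hαH : α ∈ H := by
      obtain ⟨l, d, hd, hdy⟩ := hTne
      rcases dmem1 d with h | h
      · rwa [hd.2] at h
      · rw [hdy] at h; exact absurd h.symm (wbot_ne_wl l)
    -- upper bounds of S' dominate T pointwise (in the y coordinate)
    have hyw : ∀ w, (∀ d ∈ S', d ≤ w) → dA w = α → ∀ l ∈ T, wl L l ≤ dY w := by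
      rintro w hw hwa l ⟨d, hd, hdy⟩
      have := hw d hd
      rw [← hdy]
      exact dY_mono this (by rw [hd.2, hwa])
    by_cases hTbdd : BddAbove T
    case neg =>
      -- lub is (α, ⊤, ⊤)
      refine ⟨mkD α (wt L) ⊤ (Or.inl hαH) (Or.inr rfl), ?_, ?_⟩
      · apply hubS'
        intro d hd
        rw [D_le_iff]
        refine Or.inr ⟨by simpa using hd.2, Or.inl ?_⟩
        simp only [dY_mkD]
        exact lt_of_le_of_ne (le_wt _) (hYle d hd)
      · intro w hw
        rw [D_le_iff]
        have hαw : α ≤ dA w := by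
          have := hw hd₀S
          rw [← hd₀A]; exact dA_mono this
        rcases lt_or_eq_of_le hαw with h | h
        · exact Or.inl (by simpa using h)
        · refine Or.inr ⟨by simpa using h, ?_⟩
          have hYw : ∀ l ∈ T, wl L l ≤ dY w :=
            hyw w (fun d hd => hw hd.1) h.symm
          have : dY w = wt L := by
            rcases W_trichotomy (dY w) with hy | hy | ⟨lw, hy⟩
            · obtain ⟨l, hl⟩ := hTne
              have := hYw l hl
              rw [hy] at this
              exact absurd this (not_le.mpr (wbot_lt_wl l))
            · exact hy
            · exfalso
              apply hTbdd
              refine ⟨lw, fun l hl => ?_⟩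
              have := hYw l hl
              rw [hy] at this
              exact wl_le_wl.mp this
          refine Or.inr ⟨by simpa using this.symm, ?_⟩
          rcases dmem2 w with ⟨-, l, -, hl⟩ | hz
          · rw [this] at hl; exact absurd hl (wt_ne_wl l)
          · simp [hz]
    case pos =>
    obtain ⟨lam, hlam⟩ := hLc T hTne hTbdd
    by_cases hlamT : lam ∈ T
    · by_cases hlamG : lam ∈ G
      · -- the B fibre over lam
        by_cases hbtop : ∃ d ∈ S', dY d = wl L lam ∧ dZ d = ⊤
        · -- max element
          obtain ⟨dm, hdm, hdmY, hdmZ⟩ := hbtop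
          refine ⟨dm, ?_, fun w hw => hw hdm.1⟩
          apply hubS'
          intro d hd
          rw [D_le_iff]
          refine Or.inr ⟨by rw [hd.2, hdm.2], ?_⟩
          have hdy : dY d ≤ wl L lam := by
            rcases W_trichotomy (dY d) with hy | hy | ⟨l, hy⟩
            · rw [hy]; exact bot_le
            · exact absurd hy (hYle d hd)
            · rw [hy]; exact wl_le_wl.mpr (hlam.1 ⟨d, hd, hy⟩)
          rcases lt_or_eq_of_le hdy with hy | hy
          · exact Or.inl (by rwa [hdmY])
          · exact Or.inr ⟨by rw [hy, hdmY], by rw [hdmZ]; exact le_top⟩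
        · -- all elements in the lam-fibre have dZ coercions from B
          set Z : Set B := {b | ∃ d ∈ S', dY d = wl L lam ∧ dZ d = (b : WithTop B)} with hZ
          have hZne : Z.Nonempty := by
            obtain ⟨d, hd, hdy⟩ := hlamT
            rcases eq_or_ne (dZ d) ⊤ with hdz | hdz
            · exact absurd ⟨d, hd, hdy, hdz⟩ hbtop
            · obtain ⟨b, hdz⟩ := WithTop.ne_top_iff_exists.mp hdz
              exact ⟨b, d, hd, hdy, hdz.symm⟩
          by_cases hZbdd : BddAbove Z
          case pos =>
            obtain ⟨β, hβ⟩ := hBc Z hZne hZbdd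
            refine ⟨mkD α (wl L lam) (β : WithTop B) (Or.inl hαH)
              (Or.inl ⟨hαH, lam, hlamG, rfl⟩), ?_, ?_⟩
            · apply hubS'
              intro d hd
              rw [D_le_iff]
              refine Or.inr ⟨by simpa using hd.2, ?_⟩
              have hdy : dY d ≤ wl L lam := by
                rcases W_trichotomy (dY d) with hy | hy | ⟨l, hy⟩
                · rw [hy]; exact bot_le
                · exact absurd hy (hYle d hd)
                · rw [hy]; exact wl_le_wl.mpr (hlam.1 ⟨d, hd, hy⟩)
              rcases lt_or_eq_of_le hdy with hy | hy
              · exact Or.inl (by simpa using hy)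
              · refine Or.inr ⟨by simpa using hy, ?_⟩
                rcases eq_or_ne (dZ d) ⊤ with hdz | hdz
                · exact absurd ⟨d, hd, hy, hdz⟩ hbtop
                · obtain ⟨b, hdz⟩ := WithTop.ne_top_iff_exists.mp hdz
                  simp only [dZ_mkD]
                  rw [← hdz]
                  exact WithTop.coe_le_coe.mpr (hβ.1 ⟨d, hd, hy, hdz.symm⟩)
            · intro w hw
              rw [D_le_iff]
              have hαw : α ≤ dA w := by
                have := hw hd₀S
                rw [← hd₀A]; exact dA_mono this
              rcases lt_or_eq_of_le hαw with h | h
              · exact Or.inl (by simpa using h)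
              · refine Or.inr ⟨by simpa using h, ?_⟩
                have hYw : ∀ l ∈ T, wl L l ≤ dY w := hyw w (fun d hd => hw hd.1) h.symm
                have hwy : wl L lam ≤ dY w := hYw lam hlamT
                rcases lt_or_eq_of_le hwy with hy | hy
                · exact Or.inl (by simpa using hy)
                · refine Or.inr ⟨by simpa using hy, ?_⟩
                  simp only [dZ_mkD]
                  rcases eq_or_ne (dZ w) ⊤ with hwz | hwz
                  · rw [hwz]; exact le_top
                  · obtain ⟨bw, hwz⟩ := WithTop.ne_top_iff_exists.mp hwz
                    rw [← hwz]
                    refine WithTop.coe_le_coe.mpr (hβ.2 ?_)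
                    rintro b ⟨d, hd, hdy, hdz⟩
                    have hle := hw hd.1
                    have : dZ d ≤ dZ w := dZ_mono hle (by rw [hd.2, ← h]) (by rw [hdy, hy])
                    rw [hdz, ← hwz] at this
                    exact WithTop.coe_le_coe.mp this
          case neg =>
            -- lub is (α, wl lam, ⊤)
            refine ⟨mkD α (wl L lam) ⊤ (Or.inl hαH) (Or.inr rfl), ?_, ?_⟩
            · apply hubS'
              intro d hd
              rw [D_le_iff]
              refine Or.inr ⟨by simpa using hd.2, ?_⟩
              have hdy : dY d ≤ wl L lam := by
                rcases W_trichotomy (dY d) with hy | hy | ⟨l, hy⟩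
                · rw [hy]; exact bot_le
                · exact absurd hy (hYle d hd)
                · rw [hy]; exact wl_le_wl.mpr (hlam.1 ⟨d, hd, hy⟩)
              rcases lt_or_eq_of_le hdy with hy | hy
              · exact Or.inl (by simpa using hy)
              · exact Or.inr ⟨by simpa using hy, by simp⟩
            · intro w hw
              rw [D_le_iff]
              have hαw : α ≤ dA w := by
                have := hw hd₀S
                rw [← hd₀A]; exact dA_mono this
              rcases lt_or_eq_of_le hαw with h | h
              · exact Or.inl (by simpa using h)
              · refine Or.inr ⟨by simpa using h, ?_⟩
                have hwy : wl L lam ≤ dY w := hyw w (fun d hd => hw hd.1) h.symm lam hlamT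
                rcases lt_or_eq_of_le hwy with hy | hy
                · exact Or.inl (by simpa using hy)
                · refine Or.inr ⟨by simpa using hy, ?_⟩
                  simp only [dZ_mkD]
                  rcases eq_or_ne (dZ w) ⊤ with hwz | hwz
                  · rw [hwz]
                  · obtain ⟨bw, hwz⟩ := WithTop.ne_top_iff_exists.mp hwz
                    exfalso
                    apply hZbdd
                    refine ⟨bw, fun b hb => ?_⟩
                    obtain ⟨d, hd, hdy, hdz⟩ := hb
                    have hle := hw hd.1
                    have : dZ d ≤ dZ w := dZ_mono hle (by rw [hd.2, ← h]) (by rw [hdy, hy])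
                    rw [hdz, ← hwz] at this
                    exact WithTop.coe_le_coe.mp this
      · -- lam ∈ T, lam ∉ G : element (α, wl lam, ⊤) is the max
        obtain ⟨dm, hdm, hdmY⟩ := hlamT
        have hdmZ : dZ dm = ⊤ := by
          rcases dmem2 dm with ⟨-, l, hl, hl2⟩ | hz
          · rw [hdmY] at hl2
            exact absurd (wl_inj.mp hl2 ▸ hl) hlamG
          · exact hz
        refine ⟨dm, ?_, fun w hw => hw hdm.1⟩
        apply hubS'
        intro d hd
        rw [D_le_iff]
        refine Or.inr ⟨by rw [hd.2, hdm.2], ?_⟩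
        have hdy : dY d ≤ wl L lam := by
          rcases W_trichotomy (dY d) with hy | hy | ⟨l, hy⟩
          · rw [hy]; exact bot_le
          · exact absurd hy (hYle d hd)
          · rw [hy]; exact wl_le_wl.mpr (hlam.1 ⟨d, hd, hy⟩)
        rcases lt_or_eq_of_le hdy with hy | hy
        · exact Or.inl (by rwa [hdmY])
        · exact Or.inr ⟨by rw [hy, hdmY], by rw [hdmZ]; exact le_top⟩
    · -- lam ∉ T ; then lam ∉ G, and the lub is (α, wl lam, ⊤)
      have hlamG : lam ∉ G := by
        intro hlamG
        obtain ⟨⟨p, hp1, hp2, hpG⟩, -⟩ := hGd lam hlamG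
        have : lam ≤ p := hlam.2 (fun l hl => by
          rcases lt_or_eq_of_le (hlam.1 hl) with h | h
          · exact hp2 l h
          · exact absurd (h ▸ hl) hlamT)
        exact absurd this (not_le.mpr hp1)
      refine ⟨mkD α (wl L lam) ⊤ (Or.inl hαH) (Or.inr rfl), ?_, ?_⟩
      · apply hubS'
        intro d hd
        rw [D_le_iff]
        refine Or.inr ⟨by simpa using hd.2, ?_⟩
        have hdy : dY d ≤ wl L lam := by
          rcases W_trichotomy (dY d) with hy | hy | ⟨l, hy⟩
          · rw [hy]; exact bot_le
          · exact absurd hy (hYle d hd)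
          · rw [hy]; exact wl_le_wl.mpr (hlam.1 ⟨d, hd, hy⟩)
        rcases lt_or_eq_of_le hdy with hy | hy
        · exact Or.inl (by simpa using hy)
        · exact Or.inr ⟨by simpa using hy, by simp⟩
      · intro w hw
        rw [D_le_iff]
        have hαw : α ≤ dA w := by
          have := hw hd₀S
          rw [← hd₀A]; exact dA_mono this
        rcases lt_or_eq_of_le hαw with h | h
        · exact Or.inl (by simpa using h)
        · refine Or.inr ⟨by simpa using h, ?_⟩
          have hYw : ∀ l ∈ T, wl L l ≤ dY w := hyw w (fun d hd => hw hd.1) h.symm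
          rcases W_trichotomy (dY w) with hy | hy | ⟨lw, hy⟩
          · obtain ⟨l, hl⟩ := hTne
            have := hYw l hl
            rw [hy] at this
            exact absurd this (not_le.mpr (wbot_lt_wl l))
          · exact Or.inl (by rw [hy]; simpa using wl_lt_wt lam)
          · have hlw : lam ≤ lw := hlam.2 (fun l hl => by
              have := hYw l hl
              rw [hy] at this
              exact wl_le_wl.mp this)
            rcases lt_or_eq_of_le hlw with h2 | h2
            · exact Or.inl (by rw [hy]; simpa using wl_lt_wl.mpr h2)
            · refine Or.inr ⟨by simp only [dY_mkD]; rw [hy, ← h2], ?_⟩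
              rcases dmem2 w with ⟨-, l, hl, hl2⟩ | hz
              · rw [hy, ← h2] at hl2
                exact absurd (wl_inj.mp hl2 ▸ hl) hlamG
              · simp [hz]

end Complete

section Sep21
variable {A L B : Type*} [LinearOrder A] [LinearOrder L] [LinearOrder B]
variable {H : Set A} {G : Set L}

lemma coords_inj : Function.Injective
    (fun d : DD A L B H G => (dA d, dY d, dZ d)) := by
  intro d₁ d₂ h
  obtain ⟨a₁, y₁, z₁, h₁, h₁', rfl⟩ := D_cases d₁
  obtain ⟨a₂, y₂, z₂, h₂, h₂', rfl⟩ := D_cases d₂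
  simp only [dA_mkD, dY_mkD, dZ_mkD, Prod.mk.injEq] at h
  exact mkD_inj.mpr ⟨h.1, h.2.1, h.2.2⟩

lemma iso_real_strict_dense {X : Type*} [LinearOrder X] (e : X ≃o ℝ) :
    ∃ Q : Set X, Q.Countable ∧ (∀ x y : X, x < y → ∃ q ∈ Q, x < q ∧ q < y) ∧
      (∀ x : X, ∃ q ∈ Q, q < x) ∧ (∀ x : X, ∃ q ∈ Q, x < q) := by
  refine ⟨Set.range (fun q : ℚ => e.symm q), Set.countable_range _, ?_, ?_, ?_⟩
  · intro x y hxy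
    obtain ⟨q, h1, h2⟩ := exists_rat_btwn (e.strictMono hxy)
    exact ⟨e.symm q, ⟨q, rfl⟩, by simpa using e.symm.strictMono h1,
      by simpa using e.symm.strictMono h2⟩
  · intro x
    obtain ⟨q, hq⟩ := exists_rat_lt (e x)
    exact ⟨e.symm q, ⟨q, rfl⟩, by simpa using e.symm.strictMono hq⟩
  · intro x
    obtain ⟨q, hq⟩ := exists_rat_gt (e x)
    exact ⟨e.symm q, ⟨q, rfl⟩, by simpa using e.symm.strictMono hq⟩

lemma D_weakSep
    (hBne : Nonempty B) (hHc : H.Countable) (hGc : G.Countable)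
    (QA : Set A) (hQAc : QA.Countable) (hQA : ∀ x y : A, x < y → ∃ q ∈ QA, x < q ∧ q < y)
    (QB : Set B) (hQBc : QB.Countable) (hQB : ∀ x y : B, x < y → ∃ q ∈ QB, x < q ∧ q < y)
    (hQBlt : ∀ x : B, ∃ q ∈ QB, q < x) (hQBgt : ∀ x : B, ∃ q ∈ QB, x < q)
    (QL : Set L) (hQLc : QL.Countable)
    (hQL : ∀ x a b : L, a < x → x < b → ∃ q ∈ QL, a < q ∧ q < b)
    (hnogap : ¬∃ x y : L, x ∉ G ∧ y ∉ G ∧ x < y ∧ ¬∃ z, x < z ∧ z < y) :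
    ∃ Q : Set (DD A L B H G), Q.Countable ∧
      ∀ d₁ d₂ : DD A L B H G, d₁ < d₂ → ∃ q ∈ Q, d₁ ≤ q ∧ q ≤ d₂ := by
  set QD : Set (DD A L B H G) :=
    {d | dA d ∈ QA ∪ H ∧ dY d ∈ ({⊥, wt L} ∪ wl L '' (QL ∪ G)) ∧
         dZ d ∈ {⊤} ∪ (fun b : B => (b : WithTop B)) '' QB} with hQD
  have hQDc : QD.Countable := by
    have h1 : QD = (fun d : DD A L B H G => (dA d, dY d, dZ d)) ⁻¹'
        ((QA ∪ H) ×ˢ (({⊥, wt L} ∪ wl L '' (QL ∪ G)) ×ˢ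
          ({⊤} ∪ (fun b : B => (b : WithTop B)) '' QB))) := by
      ext d; simp only [hQD, Set.mem_setOf_eq, Set.mem_preimage, Set.mem_prod]
    rw [h1]
    apply Set.Countable.preimage _ coords_inj
    exact ((hQAc.union hHc).prod (((Set.countable_singleton _).insert _ |>.union
      ((hQLc.union hGc).image _)).prod ((Set.countable_singleton _).union (hQBc.image _))))
  refine ⟨QD, hQDc, ?_⟩
  intro d₁ d₂ hlt
  obtain ⟨a₁, y₁, z₁, h₁, h₁', rfl⟩ := D_cases d₁
  obtain ⟨a₂, y₂, z₂, h₂, h₂', rfl⟩ := D_cases d₂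
  rw [mkD_lt_mkD] at hlt
  rcases hlt with hlt | ⟨rfl, hlt⟩
  · obtain ⟨a, haQ, ha1, ha2⟩ := hQA _ _ hlt
    refine ⟨mkD a ⊥ ⊤ (Or.inr rfl) (Or.inr rfl), ?_, ?_, ?_⟩
    · exact ⟨Or.inl haQ, by simp, by simp⟩
    · rw [mkD_le_mkD]; exact Or.inl ha1
    · rw [mkD_le_mkD]; exact Or.inl ha2
  rcases hlt with hlt | ⟨rfl, hlt⟩
  · -- same a, y₁ < y₂
    have haH : a₁ ∈ H := by
      rcases h₂ with h | h
      · exact h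
      · rw [h] at hlt; exact absurd hlt not_lt_bot
    rcases W_trichotomy y₁ with rfl | rfl | ⟨l₁, rfl⟩
    · -- y₁ = ⊥ : d₁ itself is in QD
      have hz₁ : z₁ = ⊤ := coreCond_z_top h₁' (fun l _ h => wbot_ne_wl l h)
      subst hz₁
      refine ⟨mkD a₁ ⊥ ⊤ h₁ h₁', ⟨Or.inr haH, by simp, by simp⟩, le_refl _, ?_⟩
      rw [mkD_le_mkD]
      exact Or.inr ⟨rfl, Or.inl hlt⟩
    · exact absurd hlt (not_lt.mpr (le_wt y₂))
    · by_cases hl₁G : l₁ ∈ G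
      · -- take (a₁, wl l₁, ⊤)
        refine ⟨mkD a₁ (wl L l₁) ⊤ (Or.inl haH) (Or.inr rfl),
          ⟨Or.inr haH, Or.inr ⟨l₁, Or.inr hl₁G, rfl⟩, by simp⟩, ?_, ?_⟩
        · rw [mkD_le_mkD]; exact Or.inr ⟨rfl, Or.inr ⟨rfl, le_top⟩⟩
        · rw [mkD_le_mkD]; exact Or.inr ⟨rfl, Or.inl hlt⟩
      · have hz₁ : z₁ = ⊤ := coreCond_z_top h₁' (fun l hl h => hl₁G (wl_inj.mp h ▸ hl))
        subst hz₁
        rcases W_trichotomy y₂ with rfl | rfl | ⟨l₂, rfl⟩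
        · exact absurd hlt not_lt_bot
        · -- d₂ = (a₁, wt, ⊤) is in QD
          have hz₂ : z₂ = ⊤ := coreCond_z_top h₂' (fun l _ h => wt_ne_wl l h)
          subst hz₂
          refine ⟨mkD a₁ (wt L) ⊤ h₂ h₂', ⟨Or.inr haH, Or.inl (by simp [wt]), by simp⟩,
            ?_, le_refl _⟩
          rw [mkD_le_mkD]
          exact Or.inr ⟨rfl, Or.inl hlt⟩
        · have hl12 : l₁ < l₂ := wl_lt_wl.mp hlt
          by_cases hmid : ∃ l, l₁ < l ∧ l < l₂
          · obtain ⟨l, hl1, hl2⟩ := hmid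
            obtain ⟨q, hqQ, hq1, hq2⟩ := hQL l l₁ l₂ hl1 hl2
            refine ⟨mkD a₁ (wl L q) ⊤ (Or.inl haH) (Or.inr rfl),
              ⟨Or.inr haH, Or.inr ⟨q, Or.inl hqQ, rfl⟩, by simp⟩, ?_, ?_⟩
            · rw [mkD_le_mkD]; exact Or.inr ⟨rfl, Or.inl (wl_lt_wl.mpr hq1)⟩
            · rw [mkD_le_mkD]; exact Or.inr ⟨rfl, Or.inl (wl_lt_wl.mpr hq2)⟩
          · have hl₂G : l₂ ∈ G := by
              by_contra hl₂G
              exact hnogap ⟨l₁, l₂, hl₁G, hl₂G, hl12, hmid⟩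
            -- take (a₁, wl l₂, b) with b ∈ QB, b ≤ z₂
            have hbex : ∃ b ∈ QB, (b : WithTop B) ≤ z₂ := by
              rcases eq_or_ne z₂ ⊤ with rfl | hz₂
              · obtain ⟨b⟩ := hBne
                obtain ⟨b', hb', -⟩ := hQBlt b
                exact ⟨b', hb', le_top⟩
              · obtain ⟨b₂, hb₂⟩ := WithTop.ne_top_iff_exists.mp hz₂
                obtain ⟨b, hbQ, hb⟩ := hQBlt b₂
                exact ⟨b, hbQ, by rw [← hb₂]; exact WithTop.coe_le_coe.mpr hb.le⟩
            obtain ⟨b, hbQ, hbz⟩ := hbex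
            refine ⟨mkD a₁ (wl L l₂) (b : WithTop B) (Or.inl haH)
              (Or.inl ⟨haH, l₂, hl₂G, rfl⟩),
              ⟨Or.inr haH, Or.inr ⟨l₂, Or.inr hl₂G, rfl⟩, Or.inr ⟨b, hbQ, rfl⟩⟩, ?_, ?_⟩
            · rw [mkD_le_mkD]; exact Or.inr ⟨rfl, Or.inl hlt⟩
            · rw [mkD_le_mkD]; exact Or.inr ⟨rfl, Or.inr ⟨rfl, hbz⟩⟩
  · -- same a, same y, z₁ < z₂ : fibre over some g ∈ G
    have hzne : z₁ ≠ ⊤ := ne_top_of_lt hlt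
    have hcore : a₁ ∈ H ∧ ∃ l ∈ G, y₁ = wl L l := by
      rcases h₁' with h | h
      · exact h
      · exact absurd h hzne
    obtain ⟨haH, g, hgG, rfl⟩ := hcore
    obtain ⟨b₁, hb₁⟩ := WithTop.ne_top_iff_exists.mp hzne
    rcases eq_or_ne z₂ ⊤ with rfl | hz₂
    · obtain ⟨b, hbQ, hb⟩ := hQBgt b₁
      refine ⟨mkD a₁ (wl L g) (b : WithTop B) (Or.inl haH) (Or.inl ⟨haH, g, hgG, rfl⟩),
        ⟨Or.inr haH, Or.inr ⟨g, Or.inr hgG, rfl⟩, Or.inr ⟨b, hbQ, rfl⟩⟩, ?_, ?_⟩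
      · rw [mkD_le_mkD]
        exact Or.inr ⟨rfl, Or.inr ⟨rfl, by rw [← hb₁]; exact (WithTop.coe_lt_coe.mpr hb).le⟩⟩
      · rw [mkD_le_mkD]; exact Or.inr ⟨rfl, Or.inr ⟨rfl, le_top⟩⟩
    · obtain ⟨b₂, hb₂⟩ := WithTop.ne_top_iff_exists.mp hz₂
      have hb12 : b₁ < b₂ := by
        rw [← hb₁, ← hb₂] at hlt
        exact WithTop.coe_lt_coe.mp hlt
      obtain ⟨b, hbQ, h1, h2⟩ := hQB _ _ hb12
      refine ⟨mkD a₁ (wl L g) (b : WithTop B) (Or.inl haH) (Or.inl ⟨haH, g, hgG, rfl⟩),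
        ⟨Or.inr haH, Or.inr ⟨g, Or.inr hgG, rfl⟩, Or.inr ⟨b, hbQ, rfl⟩⟩, ?_, ?_⟩
      · rw [mkD_le_mkD]
        exact Or.inr ⟨rfl, Or.inr ⟨rfl, by rw [← hb₁]; exact (WithTop.coe_lt_coe.mpr h1).le⟩⟩
      · rw [mkD_le_mkD]
        exact Or.inr ⟨rfl, Or.inr ⟨rfl, by rw [← hb₂]; exact (WithTop.coe_lt_coe.mpr h2).le⟩⟩

end Sep21

section Assemble21
variable {A L B : Type*} [LinearOrder A] [LinearOrder L] [LinearOrder B]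
variable {H : Set A} {G : Set L}

lemma core_discEmb (hGd : DiscretelyEmbedded G) :
    DiscretelyEmbedded (PLP1core (L := L) H G) := by
  intro c hc
  obtain ⟨a, y, h, rfl⟩ := C_cases c
  obtain ⟨haH, g, hgG, rfl⟩ := mkC_mem_core.mp hc
  obtain ⟨⟨p, hp1, hp2, hpG⟩, ⟨s, hs1, hs2, hsG⟩⟩ := hGd g hgG
  constructor
  · refine ⟨mkC a (wl L p) (Or.inl haH), ?_, ?_, ?_⟩
    · rw [mkC_lt_mkC]; exact Or.inr ⟨rfl, wl_lt_wl.mpr hp1⟩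
    · intro c' hc'
      obtain ⟨a', y', h', rfl⟩ := C_cases c'
      rw [mkC_lt_mkC] at hc'
      rw [mkC_le_mkC]
      rcases hc' with hc' | ⟨rfl, hy⟩
      · exact Or.inl hc'
      · refine Or.inr ⟨rfl, ?_⟩
        rcases W_trichotomy y' with rfl | rfl | ⟨l', rfl⟩
        · exact bot_le
        · exact absurd hy (not_lt.mpr (le_wt _))
        · exact wl_le_wl.mpr (hp2 l' (wl_lt_wl.mp hy))
    · exact mkC_mem_core.mpr ⟨haH, p, hpG, rfl⟩
  · refine ⟨mkC a (wl L s) (Or.inl haH), ?_, ?_, ?_⟩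
    · rw [mkC_lt_mkC]; exact Or.inr ⟨rfl, wl_lt_wl.mpr hs1⟩
    · intro c' hc'
      obtain ⟨a', y', h', rfl⟩ := C_cases c'
      rw [mkC_lt_mkC] at hc'
      rw [mkC_le_mkC]
      rcases hc' with hc' | ⟨rfl, hy⟩
      · exact Or.inl hc'
      · refine Or.inr ⟨rfl, ?_⟩
        rcases W_trichotomy y' with rfl | rfl | ⟨l', rfl⟩
        · exact absurd hy (not_lt.mpr bot_le)
        · exact le_wt _
        · exact wl_le_wl.mpr (hs2 l' (wl_lt_wl.mp hy))
    · exact mkC_mem_core.mpr ⟨haH, s, hsG, rfl⟩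

theorem dir21 [Nonempty B] (hH : H.Nonempty) (hG : G.Nonempty)
    (heA : Nonempty (A ≃o ℝ)) (heB : Nonempty (B ≃o ℝ))
    (hHc : H.Countable) (hGc : G.Countable)
    (hLc : ∀ S : Set L, S.Nonempty → BddAbove S → ∃ m, IsLUB S m)
    (hLsep : ∃ Q : Set L, Q.Countable ∧ @Dense L (Preorder.topology L) Q)
    (hLmin : ¬∃ m : L, ∀ x, m ≤ x) (hLmax : ¬∃ m : L, ∀ x, x ≤ m)
    (hGd : DiscretelyEmbedded G)
    (hnogap : ¬∃ x y : L, x ∉ G ∧ y ∉ G ∧ x < y ∧ ¬∃ z, x < z ∧ z < y) :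
    DiscretelyEmbedded (PLP1core (L := L) H G) ∧ Nonempty (DD A L B H G ≃o ℝ) := by
  refine ⟨core_discEmb hGd, ?_⟩
  obtain ⟨eA⟩ := heA
  obtain ⟨eB⟩ := heB
  obtain ⟨-, hAd, hAmin, hAmax, hAc, -⟩ := real_char.mp ⟨eA⟩
  obtain ⟨-, hBd, hBmin, hBmax, hBc, -⟩ := real_char.mp ⟨eB⟩
  have hLmin' : ∀ m : L, ∃ x, x < m := by
    intro m
    by_contra hc
    push_neg at hc
    exact hLmin ⟨m, hc⟩
  have hLmax' : ∀ m : L, ∃ x, m < x := by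
    intro m
    by_contra hc
    push_neg at hc
    exact hLmax ⟨m, hc⟩
  have hLne : Nonempty L := ⟨hG.choose⟩
  obtain ⟨QL, hQLc, hQLd⟩ := hLsep
  have hQL : ∀ x a b : L, a < x → x < b → ∃ q ∈ QL, a < q ∧ q < b :=
    (dense_order_iff hLmin' hLmax' QL).mp hQLd
  obtain ⟨QA, hQAc, hQA, -, -⟩ := iso_real_strict_dense eA
  obtain ⟨QB, hQBc, hQB, hQBlt, hQBgt⟩ := iso_real_strict_dense eB
  obtain ⟨QD, hQDc, hQDd⟩ := D_weakSep (H := H) (G := G) ‹Nonempty B› hHc hGc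
    QA hQAc hQA QB hQBc hQB hQBlt hQBgt QL hQLc hQL hnogap
  have hDd : DenselyOrdered (DD A L B H G) :=
    D_dense hAd hBd hBmin hBmax hLmin' hLmax' hLne ‹Nonempty B› hGd hnogap
  have hDc := D_complete (H := H) (G := G) (B := B) hAc hBc hLc hGd
  have hDmin : NoMinOrder (DD A L B H G) := ⟨by
    intro d
    obtain ⟨a, ha⟩ := exists_lt (dA d)
    refine ⟨mkD a ⊥ ⊤ (Or.inr rfl) (Or.inr rfl), ?_⟩
    rw [D_lt_iff]
    exact Or.inl (by simpa using ha)⟩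
  have hDmax : NoMaxOrder (DD A L B H G) := ⟨by
    intro d
    obtain ⟨a, ha⟩ := exists_gt (dA d)
    refine ⟨mkD a ⊥ ⊤ (Or.inr rfl) (Or.inr rfl), ?_⟩
    rw [D_lt_iff]
    exact Or.inl (by simpa using ha)⟩
  exact real_char_rev hDd hDc (mkD hH.choose ⊥ ⊤ (Or.inr rfl) (Or.inr rfl)) hDmin hDmax
    QD hQDc hQDd

end Assemble21


section Dir12
variable {A L B : Type*} [LinearOrder A] [LinearOrder L] [LinearOrder B]
variable {H : Set A} {G : Set L}

-- extraction of the L coordinate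
variable (G) in
noncomputable def eL (hG : G.Nonempty) (y : WW L) : L := (y.unbotD ⊤).untopD hG.choose

@[simp] lemma eL_wl (hG : G.Nonempty) (l : L) : eL G hG (wl L l) = l := rfl

lemma A_iso_real [Nonempty B] (hH : H.Nonempty) (hG : G.Nonempty)
    (eD : DD A L B H G ≃o ℝ) : Nonempty (A ≃o ℝ) := by
  obtain ⟨-, hDd, hDmin, hDmax, hDc, -⟩ := real_char.mp ⟨eD⟩
  obtain ⟨QD, hQDc, hQDd, -, -⟩ := iso_real_strict_dense eD
  -- density of A
  have hAd : DenselyOrdered A := by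
    constructor
    intro a₁ a₂ h12
    by_contra hmid
    push_neg at hmid
    -- d₁ depends on whether a₁ ∈ H
    by_cases ha₁H : a₁ ∈ H
    · have hlt : (mkD a₁ (wt L) ⊤ (Or.inl ha₁H) (Or.inr rfl) : DD A L B H G) <
          mkD a₂ ⊥ ⊤ (Or.inr rfl) (Or.inr rfl) := by
        rw [mkD_lt_mkD]; exact Or.inl h12
      obtain ⟨q, hq1, hq2⟩ := exists_between hlt
      rw [D_lt_iff] at hq1 hq2
      simp only [dA_mkD, dY_mkD, dZ_mkD] at hq1 hq2
      have h1 : a₁ < dA q := by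
        rcases hq1 with h | ⟨-, h | ⟨h, h'⟩⟩
        · exact h
        · exact absurd h (not_lt.mpr (le_wt _))
        · exact absurd h' not_top_lt
      have h2 : dA q < a₂ := by
        rcases hq2 with h | ⟨-, h | ⟨hy, h'⟩⟩
        · exact h
        · exact absurd h (not_lt.mpr bot_le)
        · exfalso
          rcases dmem2 q with ⟨-, l, -, hl⟩ | hz
          · rw [hy] at hl; exact absurd hl (wbot_ne_wl l)
          · rw [hz] at h'; exact absurd h' (lt_irrefl _)
      exact absurd (hmid (dA q) h1) (not_le.mpr h2)
    · have hlt : (mkD a₁ ⊥ ⊤ (Or.inr rfl) (Or.inr rfl) : DD A L B H G) <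
          mkD a₂ ⊥ ⊤ (Or.inr rfl) (Or.inr rfl) := by
        rw [mkD_lt_mkD]; exact Or.inl h12
      obtain ⟨q, hq1, hq2⟩ := exists_between hlt
      rw [D_lt_iff] at hq1 hq2
      simp only [dA_mkD, dY_mkD, dZ_mkD] at hq1 hq2
      have h1 : a₁ < dA q := by
        rcases hq1 with h | ⟨he, h | ⟨h, h'⟩⟩
        · exact h
        · exfalso
          rcases dmem1 q with hm | hm
          · rw [← he] at hm; exact ha₁H hm
          · rw [hm] at h; exact absurd h (lt_irrefl _)
        · exact absurd h' not_top_lt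
      have h2 : dA q < a₂ := by
        rcases hq2 with h | ⟨-, h | ⟨hy, h'⟩⟩
        · exact h
        · exact absurd h (not_lt.mpr bot_le)
        · exfalso
          rcases dmem2 q with ⟨-, l, -, hl⟩ | hz
          · rw [hy] at hl; exact absurd hl (wbot_ne_wl l)
          · rw [hz] at h'; exact absurd h' (lt_irrefl _)
      exact absurd (hmid (dA q) h1) (not_le.mpr h2)
  -- no min
  have hAmin : NoMinOrder A := by
    constructor
    intro a
    by_contra hc
    push_neg at hc
    have : ∀ d : DD A L B H G, (mkD a ⊥ ⊤ (Or.inr rfl) (Or.inr rfl) : DD A L B H G) ≤ d := by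
      intro d
      rw [D_le_iff]
      rcases lt_or_eq_of_le (hc (dA d)) with h | h
      · exact Or.inl (by simpa using h)
      · refine Or.inr ⟨by simpa using h, ?_⟩
        rcases eq_or_lt_of_le (bot_le : (⊥ : WW L) ≤ dY d) with hy | hy
        · refine Or.inr ⟨by simpa using hy, ?_⟩
          rcases dmem2 d with ⟨-, l, -, hl⟩ | hz
          · rw [← hy] at hl; exact absurd hl (wbot_ne_wl l)
          · simp [hz]
        · exact Or.inl (by simpa using hy)
    obtain ⟨d', hd'⟩ := exists_lt (mkD a ⊥ ⊤ (Or.inr rfl) (Or.inr rfl) : DD A L B H G)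
    exact absurd (this d') (not_le.mpr hd')
  -- no max
  have hAmax : NoMaxOrder A := by
    constructor
    intro a
    by_contra hc
    push_neg at hc
    by_cases haH : a ∈ H
    · have : ∀ d : DD A L B H G, d ≤ mkD a (wt L) ⊤ (Or.inl haH) (Or.inr rfl) := by
        intro d
        rw [D_le_iff]
        rcases lt_or_eq_of_le (hc (dA d)) with h | h
        · exact Or.inl (by simpa using h)
        · refine Or.inr ⟨by simpa using h, ?_⟩
          rcases eq_or_lt_of_le (le_wt (dY d)) with hy | hy
          · refine Or.inr ⟨by simpa using hy, ?_⟩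
            rcases dmem2 d with ⟨-, l, -, hl⟩ | hz
            · rw [hy] at hl; exact absurd hl (wt_ne_wl l)
            · simp [hz]
          · exact Or.inl (by simpa using hy)
      obtain ⟨d', hd'⟩ := exists_gt (mkD a (wt L) ⊤ (Or.inl haH) (Or.inr rfl) : DD A L B H G)
      exact absurd (this d') (not_le.mpr hd')
    · have : ∀ d : DD A L B H G, d ≤ mkD a ⊥ ⊤ (Or.inr rfl) (Or.inr rfl) := by
        intro d
        rw [D_le_iff]
        rcases lt_or_eq_of_le (hc (dA d)) with h | h
        · exact Or.inl (by simpa using h)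
        · refine Or.inr ⟨by simpa using h, ?_⟩
          have hy : dY d = ⊥ := by
            rcases dmem1 d with hm | hm
            · exact absurd (h ▸ hm) haH
            · exact hm
          refine Or.inr ⟨by simpa using hy, ?_⟩
          rcases dmem2 d with ⟨-, l, -, hl⟩ | hz
          · rw [hy] at hl; exact absurd hl (wbot_ne_wl l)
          · simp [hz]
      obtain ⟨d', hd'⟩ := exists_gt (mkD a ⊥ ⊤ (Or.inr rfl) (Or.inr rfl) : DD A L B H G)
      exact absurd (this d') (not_le.mpr hd')
  -- completeness
  have hAc : ∀ S : Set A, S.Nonempty → BddAbove S → ∃ m, IsLUB S m := by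
    intro S hSne hSbdd
    obtain ⟨u, hu⟩ := hSbdd
    set Sl : Set (DD A L B H G) := (fun a => mkD a ⊥ ⊤ (Or.inr rfl) (Or.inr rfl)) '' S with hSl
    have hSlne : Sl.Nonempty := hSne.image _
    have hSlbdd : BddAbove Sl := by
      refine ⟨mkD u ⊥ ⊤ (Or.inr rfl) (Or.inr rfl), ?_⟩
      rintro _ ⟨a, ha, rfl⟩
      rw [mkD_le_mkD]
      rcases lt_or_eq_of_le (hu ha) with h | h
      · exact Or.inl h
      · exact Or.inr ⟨h, Or.inr ⟨rfl, le_refl _⟩⟩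
    obtain ⟨w, hw⟩ := hDc Sl hSlne hSlbdd
    refine ⟨dA w, ?_, ?_⟩
    · intro a ha
      have := hw.1 ⟨a, ha, rfl⟩
      exact le_trans (by simp) (dA_mono this)
    · intro v hv
      by_cases hvH : v ∈ H
      · have : w ≤ mkD v (wt L) ⊤ (Or.inl hvH) (Or.inr rfl) := by
          apply hw.2
          rintro _ ⟨a, ha, rfl⟩
          rw [mkD_le_mkD]
          rcases lt_or_eq_of_le (hv ha) with h | h
          · exact Or.inl h
          · exact Or.inr ⟨h, Or.inl wbot_lt_wt⟩
        have := dA_mono this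
        simpa using this
      · have : w ≤ mkD v ⊥ ⊤ (Or.inr rfl) (Or.inr rfl) := by
          apply hw.2
          rintro _ ⟨a, ha, rfl⟩
          rw [mkD_le_mkD]
          rcases lt_or_eq_of_le (hv ha) with h | h
          · exact Or.inl h
          · exact Or.inr ⟨h, Or.inr ⟨rfl, le_refl _⟩⟩
        have := dA_mono this
        simpa using this
  -- separability
  have hAs : ∃ Q : Set A, Q.Countable ∧ ∀ x y : A, x < y → ∃ q ∈ Q, x ≤ q ∧ q ≤ y := by
    refine ⟨dA '' QD, hQDc.image _, ?_⟩
    intro x y hxy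
    have hlt : (mkD x ⊥ ⊤ (Or.inr rfl) (Or.inr rfl) : DD A L B H G) <
        mkD y ⊥ ⊤ (Or.inr rfl) (Or.inr rfl) := by
      rw [mkD_lt_mkD]; exact Or.inl hxy
    obtain ⟨q, hqQ, hq1, hq2⟩ := hQDd _ _ hlt
    refine ⟨dA q, ⟨q, hqQ, rfl⟩, ?_, ?_⟩
    · have := dA_mono hq1.le; simpa using this
    · have := dA_mono hq2.le; simpa using this
  exact real_char.mpr ⟨⟨hH.choose⟩, hAd, hAmin, hAmax, hAc, hAs⟩

end Dir12

section Dir12B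
variable {A L B : Type*} [LinearOrder A] [LinearOrder L] [LinearOrder B]
variable {H : Set A} {G : Set L}

lemma between_fiber {a : A} {y : WW L} {z₁ z₂ : WithTop B} {h h' hc hc'} {q : DD A L B H G}
    (hq1 : mkD a y z₁ h hc < q) (hq2 : q < mkD a y z₂ h' hc') :
    dA q = a ∧ dY q = y ∧ z₁ < dZ q ∧ dZ q < z₂ := by
  rw [D_lt_iff] at hq1 hq2
  simp only [dA_mkD, dY_mkD, dZ_mkD] at hq1 hq2
  rcases hq1 with h1 | ⟨ha1, h1⟩
  · rcases hq2 with h2 | ⟨ha2, h2⟩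
    · exact absurd (h1.trans h2) (lt_irrefl _)
    · rw [ha2] at h1; exact absurd h1 (lt_irrefl _)
  · rcases hq2 with h2 | ⟨ha2, h2⟩
    · rw [← ha1] at h2; exact absurd h2 (lt_irrefl _)
    · refine ⟨ha1.symm, ?_⟩
      rcases h1 with h1 | ⟨hy1, h1⟩
      · rcases h2 with h2 | ⟨hy2, h2⟩
        · exact absurd (h1.trans h2) (lt_irrefl _)
        · rw [hy2] at h1; exact absurd h1 (lt_irrefl _)
      · rcases h2 with h2 | ⟨hy2, h2⟩
        · rw [← hy1] at h2; exact absurd h2 (lt_irrefl _)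
        · exact ⟨hy1.symm, h1, h2⟩

lemma B_iso_real [Nonempty B] (hH : H.Nonempty) (hG : G.Nonempty)
    (hCd : DiscretelyEmbedded (PLP1core (L := L) H G))
    (eD : DD A L B H G ≃o ℝ) : Nonempty (B ≃o ℝ) := by
  obtain ⟨-, hDd, -, -, hDc, -⟩ := real_char.mp ⟨eD⟩
  obtain ⟨QD, hQDc, hQDd, -, -⟩ := iso_real_strict_dense eD
  obtain ⟨h₀, hh₀⟩ := hH
  obtain ⟨g₀, hg₀⟩ := hG
  have hmem : (h₀ ∈ H ∨ wl L g₀ = (⊥ : WW L)) := Or.inl hh₀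
  have hcore : ∀ z : WithTop B, CoreCond (H := H) G h₀ (wl L g₀) z :=
    fun _ => Or.inl ⟨hh₀, g₀, hg₀, rfl⟩
  set db : B → DD A L B H G := fun b => mkD h₀ (wl L g₀) (b : WithTop B) hmem (hcore _)
    with hdb
  have hdb_lt : ∀ {b₁ b₂ : B}, b₁ < b₂ → db b₁ < db b₂ := by
    intro b₁ b₂ h
    rw [hdb, mkD_lt_mkD]
    exact Or.inr ⟨rfl, Or.inr ⟨rfl, WithTop.coe_lt_coe.mpr h⟩⟩
  have hdb_le : ∀ {b₁ b₂ : B}, b₁ ≤ b₂ → db b₁ ≤ db b₂ := by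
    intro b₁ b₂ h
    rw [hdb, mkD_le_mkD]
    exact Or.inr ⟨rfl, Or.inr ⟨rfl, WithTop.coe_le_coe.mpr h⟩⟩
  -- dense
  have hBd : DenselyOrdered B := by
    constructor
    intro b₁ b₂ h12
    obtain ⟨q, hq1, hq2⟩ := exists_between (hdb_lt h12)
    obtain ⟨-, -, h1, h2⟩ := between_fiber hq1 hq2
    obtain ⟨b, hb⟩ := WithTop.ne_top_iff_exists.mp (ne_top_of_lt h2)
    rw [← hb] at h1 h2
    exact ⟨b, WithTop.coe_lt_coe.mp h1, WithTop.coe_lt_coe.mp h2⟩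
  -- no max
  have hBmax : NoMaxOrder B := by
    constructor
    intro b
    have hlt : db b < mkD h₀ (wl L g₀) ⊤ hmem (hcore _) := by
      rw [hdb, mkD_lt_mkD]
      exact Or.inr ⟨rfl, Or.inr ⟨rfl, WithTop.coe_lt_top b⟩⟩
    obtain ⟨q, hq1, hq2⟩ := exists_between hlt
    obtain ⟨-, -, h1, h2⟩ := between_fiber hq1 hq2
    obtain ⟨b', hb'⟩ := WithTop.ne_top_iff_exists.mp (ne_top_of_lt h2)
    rw [← hb'] at h1
    exact ⟨b', WithTop.coe_lt_coe.mp h1⟩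
  -- no min : uses the predecessor of the core point
  have hBmin : NoMinOrder B := by
    constructor
    intro b
    obtain ⟨⟨p, hp1, hp2, hpC⟩, -⟩ := hCd (mkC h₀ (wl L g₀) hmem)
      (mkC_mem_core.mpr ⟨hh₀, g₀, hg₀, rfl⟩)
    obtain ⟨ap, yp, hp, rfl⟩ := C_cases p
    obtain ⟨hapH, gp, hgpG, rfl⟩ := mkC_mem_core.mp hpC
    have hdp_lt : (mkD ap (wl L gp) ⊤ hp (Or.inr rfl) : DD A L B H G) < db b := by
      rw [hdb, mkD_lt_mkD]
      rw [mkC_lt_mkC] at hp1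
      rcases hp1 with h | ⟨he, h⟩
      · exact Or.inl h
      · exact Or.inr ⟨he, Or.inl h⟩
    obtain ⟨q, hq1, hq2⟩ := exists_between hdp_lt
    rw [D_lt_iff] at hq1 hq2
    simp only [dA_mkD, dY_mkD, dZ_mkD] at hq1 hq2
    -- the C-coordinate of q
    have hpltq : mkC ap (wl L gp) hp < mkC (dA q) (dY q) (dmem1 q) := by
      rw [mkC_lt_mkC]
      rcases hq1 with h | ⟨he, h | ⟨hy, hz⟩⟩
      · exact Or.inl h
      · exact Or.inr ⟨he, h⟩
      · exact absurd hz not_top_lt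
    have hq2' : dZ q < (b : WithTop B) ∧ dA q = h₀ ∧ dY q = wl L g₀ := by
      rcases hq2 with h | ⟨he, h | ⟨hy, hz⟩⟩
      · exfalso
        have : mkC (dA q) (dY q) (dmem1 q) < mkC h₀ (wl L g₀) hmem := by
          rw [mkC_lt_mkC]; exact Or.inl h
        exact absurd (hp2 _ this) (not_le.mpr hpltq)
      · exfalso
        have : mkC (dA q) (dY q) (dmem1 q) < mkC h₀ (wl L g₀) hmem := by
          rw [mkC_lt_mkC]; exact Or.inr ⟨he, h⟩
        exact absurd (hp2 _ this) (not_le.mpr hpltq)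
      · exact ⟨hz, he, hy⟩
    obtain ⟨hz, -, -⟩ := hq2'
    obtain ⟨b', hb'⟩ := WithTop.ne_top_iff_exists.mp (ne_top_of_lt hz)
    rw [← hb'] at hz
    exact ⟨b', WithTop.coe_lt_coe.mp hz⟩
  -- completeness
  have hBc : ∀ S : Set B, S.Nonempty → BddAbove S → ∃ m, IsLUB S m := by
    intro S hSne hSbdd
    obtain ⟨u, hu⟩ := hSbdd
    set Sl : Set (DD A L B H G) := db '' S with hSl
    have hSlne : Sl.Nonempty := hSne.image _
    have hSlbdd : BddAbove Sl := by
      refine ⟨db u, ?_⟩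
      rintro _ ⟨b, hbS, rfl⟩
      exact hdb_le (hu hbS)
    obtain ⟨w, hw⟩ := hDc Sl hSlne hSlbdd
    obtain ⟨b₀, hb₀S⟩ := hSne
    have hwub : w ≤ db u := hw.2 (by rintro _ ⟨b, hbS, rfl⟩; exact hdb_le (hu hbS))
    have hwlb : db b₀ ≤ w := hw.1 ⟨b₀, hb₀S, rfl⟩
    have hwA : dA w = h₀ := by
      have h1 := dA_mono hwlb
      have h2 := dA_mono hwub
      simp only [hdb, dA_mkD] at h1 h2
      exact le_antisymm h2 h1
    have hwY : dY w = wl L g₀ := by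
      have h1 := dY_mono hwlb (by simp [hdb, hwA])
      have h2 := dY_mono hwub (by simp [hdb, hwA])
      simp only [hdb, dY_mkD] at h1 h2
      exact le_antisymm h2 h1
    have hwZ : dZ w ≤ (u : WithTop B) := by
      have := dZ_mono hwub (by simp [hdb, hwA]) (by simp [hdb, hwY])
      simpa [hdb] using this
    have hne : dZ w ≠ ⊤ := by
      intro hc
      rw [hc] at hwZ
      exact absurd (top_le_iff.mp hwZ) (WithTop.coe_ne_top (a := u))
    obtain ⟨m, hm⟩ := WithTop.ne_top_iff_exists.mp hne
    refine ⟨m, ?_, ?_⟩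
    · intro b hbS
      have := dZ_mono (hw.1 ⟨b, hbS, rfl⟩) (by simp [hdb, hwA]) (by simp [hdb, hwY])
      rw [← hm] at this
      simpa [hdb] using WithTop.coe_le_coe.mp (by simpa [hdb] using this)
    · intro v hv
      have : w ≤ db v := hw.2 (by rintro _ ⟨b, hbS, rfl⟩; exact hdb_le (hv hbS))
      have := dZ_mono this (by simp [hdb, hwA]) (by simp [hdb, hwY])
      rw [← hm] at this
      exact WithTop.coe_le_coe.mp (by simpa [hdb] using this)
  -- separability
  have hBs : ∃ Q : Set B, Q.Countable ∧ ∀ x y : B, x < y → ∃ q ∈ Q, x ≤ q ∧ q ≤ y := by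
    have hBne : Nonempty B := ‹_›
    refine ⟨(fun q : DD A L B H G => (dZ q).untopD (Classical.arbitrary B)) '' QD,
      hQDc.image _, ?_⟩
    intro x y hxy
    obtain ⟨q, hqQ, hq1, hq2⟩ := hQDd _ _ (hdb_lt hxy)
    obtain ⟨-, -, h1, h2⟩ := between_fiber hq1 hq2
    obtain ⟨b, hb⟩ := WithTop.ne_top_iff_exists.mp (ne_top_of_lt h2)
    refine ⟨b, ⟨q, hqQ, by show WithTop.untopD _ (dZ q) = b; rw [← hb]; simp⟩, ?_, ?_⟩
    · rw [← hb] at h1; exact (WithTop.coe_lt_coe.mp h1).le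
    · rw [← hb] at h2; exact (WithTop.coe_lt_coe.mp h2).le
  exact real_char.mpr ⟨‹Nonempty B›, hBd, hBmin, hBmax, hBc, hBs⟩

end Dir12B

section Dir12C
variable {A L B : Type*} [LinearOrder A] [LinearOrder L] [LinearOrder B]
variable {H : Set A} {G : Set L}

theorem dir12 [Nonempty B] (hH : H.Nonempty) (hG : G.Nonempty)
    (hCd : DiscretelyEmbedded (PLP1core (L := L) H G))
    (eD : DD A L B H G ≃o ℝ) :
    Nonempty (A ≃o ℝ) ∧ Nonempty (B ≃o ℝ) ∧ H.Countable ∧ G.Countable ∧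
      (∀ S : Set L, S.Nonempty → BddAbove S → ∃ m, IsLUB S m) ∧
      (∃ Q : Set L, Q.Countable ∧ @Dense L (Preorder.topology L) Q) ∧
      (¬∃ m : L, ∀ x, m ≤ x) ∧ (¬∃ m : L, ∀ x, x ≤ m) ∧
      DiscretelyEmbedded G ∧
      ¬∃ x y : L, x ∉ G ∧ y ∉ G ∧ x < y ∧ ¬∃ z, x < z ∧ z < y := by
  obtain ⟨-, hDd, -, -, hDc, -⟩ := real_char.mp ⟨eD⟩
  obtain ⟨QD, hQDc, hQDd, -, -⟩ := iso_real_strict_dense eD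
  obtain ⟨h₀, hh₀⟩ := id hH
  obtain ⟨g₀, hg₀⟩ := id hG
  -- generic squeeze for elements between two D-points in the same H-fibre
  have fiber_y : ∀ (y₁ y₂ : WW L) (h₁ : h₀ ∈ H ∨ y₁ = ⊥) (h₂ : h₀ ∈ H ∨ y₂ = ⊥)
      (hc₁ : CoreCond (H := H) G h₀ y₁ ⊤) (hc₂ : CoreCond (H := H) G h₀ y₂ ⊤)
      (q : DD A L B H G), mkD h₀ y₁ ⊤ h₁ hc₁ < q → q < mkD h₀ y₂ ⊤ h₂ hc₂ →
      dA q = h₀ ∧ y₁ < dY q ∧ (dY q < y₂ ∨ (dY q = y₂ ∧ dZ q < ⊤)) := by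
    intro y₁ y₂ h₁ h₂ hc₁ hc₂ q hq1 hq2
    rw [D_lt_iff] at hq1 hq2
    simp only [dA_mkD, dY_mkD, dZ_mkD] at hq1 hq2
    rcases hq1 with h1 | ⟨ha1, h1⟩
    · rcases hq2 with h2 | ⟨ha2, h2⟩
      · exact absurd (h1.trans h2) (lt_irrefl _)
      · rw [ha2] at h1; exact absurd h1 (lt_irrefl _)
    · rcases hq2 with h2 | ⟨ha2, h2⟩
      · rw [← ha1] at h2; exact absurd h2 (lt_irrefl _)
      · have hy1 : y₁ < dY q := by
          rcases h1 with h1 | ⟨-, h1⟩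
          · exact h1
          · exact absurd h1 not_top_lt
        exact ⟨ha1.symm, hy1, h2⟩
  -- H is countable
  have hHc : H.Countable := by
    apply Set.Countable.mono _ (hQDc.image dA)
    intro h hh
    have hlt : (mkD h ⊥ ⊤ (Or.inr rfl) (Or.inr rfl) : DD A L B H G) <
        mkD h (wt L) ⊤ (Or.inl hh) (Or.inr rfl) := by
      rw [mkD_lt_mkD]; exact Or.inr ⟨rfl, Or.inl wbot_lt_wt⟩
    obtain ⟨q, hqQ, hq1, hq2⟩ := hQDd _ _ hlt
    rw [D_lt_iff] at hq1 hq2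
    simp only [dA_mkD, dY_mkD, dZ_mkD] at hq1 hq2
    have e1 : h ≤ dA q := by
      rcases hq1 with h1 | ⟨h1, -⟩
      · exact h1.le
      · exact h1.le
    have e2 : dA q ≤ h := by
      rcases hq2 with h2 | ⟨h2, -⟩
      · exact h2.le
      · exact h2.le
    exact ⟨q, hqQ, le_antisymm e2 e1⟩
  -- G is countable
  have hGc : G.Countable := by
    apply Set.Countable.mono _ (hQDc.image (fun q => eL G hG (dY q)))
    intro g hg
    have hlt : (mkD h₀ (wl L g) ((Classical.arbitrary B : B) : WithTop B) (Or.inl hh₀)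
        (Or.inl ⟨hh₀, g, hg, rfl⟩) : DD A L B H G) <
        mkD h₀ (wl L g) ⊤ (Or.inl hh₀) (Or.inr rfl) := by
      rw [mkD_lt_mkD]; exact Or.inr ⟨rfl, Or.inr ⟨rfl, WithTop.coe_lt_top _⟩⟩
    obtain ⟨q, hqQ, hq1, hq2⟩ := hQDd _ _ hlt
    obtain ⟨-, hy, -, -⟩ := between_fiber hq1 hq2
    exact ⟨q, hqQ, by show eL G hG (dY q) = g; rw [hy]; simp⟩
  -- completeness of L
  have hLc : ∀ S : Set L, S.Nonempty → BddAbove S → ∃ m, IsLUB S m := by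
    intro S hSne hSbdd
    obtain ⟨u, hu⟩ := hSbdd
    set dl : L → DD A L B H G := fun l => mkD h₀ (wl L l) ⊤ (Or.inl hh₀) (Or.inr rfl) with hdl
    have hdl_le : ∀ {l₁ l₂ : L}, l₁ ≤ l₂ → dl l₁ ≤ dl l₂ := by
      intro l₁ l₂ h
      rw [hdl, mkD_le_mkD]
      rcases lt_or_eq_of_le h with h | h
      · exact Or.inr ⟨rfl, Or.inl (wl_lt_wl.mpr h)⟩
      · exact Or.inr ⟨rfl, Or.inr ⟨by rw [h], le_refl _⟩⟩
    obtain ⟨w, hw⟩ := hDc (dl '' S) (hSne.image _) ⟨dl u, by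
      rintro _ ⟨l, hl, rfl⟩; exact hdl_le (hu hl)⟩
    obtain ⟨l₀, hl₀S⟩ := hSne
    have hwub : w ≤ dl u := hw.2 (by rintro _ ⟨l, hl, rfl⟩; exact hdl_le (hu hl))
    have hwlb : dl l₀ ≤ w := hw.1 ⟨l₀, hl₀S, rfl⟩
    have hwA : dA w = h₀ := by
      have h1 := dA_mono hwlb
      have h2 := dA_mono hwub
      simp only [hdl, dA_mkD] at h1 h2
      exact le_antisymm h2 h1
    have hwY1 : wl L l₀ ≤ dY w := by
      have := dY_mono hwlb (by simp [hdl, hwA])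
      simpa [hdl] using this
    have hwY2 : dY w ≤ wl L u := by
      have := dY_mono hwub (by simp [hdl, hwA])
      simpa [hdl] using this
    obtain ⟨m, hm⟩ : ∃ m : L, dY w = wl L m := by
      rcases W_trichotomy (dY w) with hy | hy | ⟨l, hy⟩
      · rw [hy] at hwY1; exact absurd hwY1 (not_le.mpr (wbot_lt_wl l₀))
      · rw [hy] at hwY2; exact absurd hwY2 (not_le.mpr (wl_lt_wt u))
      · exact ⟨l, hy⟩
    refine ⟨m, ?_, ?_⟩
    · intro l hl
      have := dY_mono (hw.1 ⟨l, hl, rfl⟩) (by simp [hdl, hwA])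
      rw [hm] at this
      exact wl_le_wl.mp (by simpa [hdl] using this)
    · intro v hv
      have : w ≤ dl v := hw.2 (by rintro _ ⟨l, hl, rfl⟩; exact hdl_le (hv hl))
      have := dY_mono this (by simp [hdl, hwA])
      rw [hm] at this
      exact wl_le_wl.mp (by simpa [hdl] using this)
  -- no minimum
  have hLmin' : ∀ m : L, ∃ x, x < m := by
    intro m
    by_cases hmG : m ∈ G
    · obtain ⟨⟨p, hp1, hp2, hpC⟩, -⟩ := hCd (mkC h₀ (wl L m) (Or.inl hh₀))
        (mkC_mem_core.mpr ⟨hh₀, m, hmG, rfl⟩)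
      obtain ⟨ap, yp, hp, rfl⟩ := C_cases p
      obtain ⟨hapH, gp, hgpG, hyp⟩ := mkC_mem_core.mp hpC
      subst hyp
      have hc' : mkC h₀ (⊥ : WW L) (Or.inr rfl) < mkC h₀ (wl L m) (Or.inl hh₀) := by
        rw [mkC_lt_mkC]; exact Or.inr ⟨rfl, wbot_lt_wl m⟩
      have h1 := hp2 _ hc'
      rw [mkC_le_mkC] at h1
      rw [mkC_lt_mkC] at hp1
      have hap : ap = h₀ := by
        rcases h1 with h1 | ⟨h1, -⟩
        · rcases hp1 with h' | ⟨h', -⟩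
          · exact absurd (h1.trans h') (lt_irrefl _)
          · exact h'
        · exact h1.symm
      rcases hp1 with h' | ⟨-, h'⟩
      · rw [hap] at h'; exact absurd h' (lt_irrefl _)
      · exact ⟨gp, wl_lt_wl.mp h'⟩
    · have hlt : (mkD h₀ ⊥ ⊤ (Or.inr rfl) (Or.inr rfl) : DD A L B H G) <
          mkD h₀ (wl L m) ⊤ (Or.inl hh₀) (Or.inr rfl) := by
        rw [mkD_lt_mkD]; exact Or.inr ⟨rfl, Or.inl (wbot_lt_wl m)⟩
      obtain ⟨q, hq1, hq2⟩ := exists_between hlt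
      obtain ⟨hqA, hqy1, hqy2⟩ := fiber_y _ _ _ _ _ _ q hq1 hq2
      have : ∃ l, dY q = wl L l ∧ l < m := by
        rcases hqy2 with h | ⟨h, hz⟩
        · rcases W_trichotomy (dY q) with hy | hy | ⟨l, hy⟩
          · rw [hy] at hqy1; exact absurd hqy1 (lt_irrefl _)
          · rw [hy] at h; exact absurd h (not_lt.mpr (le_wt _))
          · rw [hy] at h; exact ⟨l, hy, wl_lt_wl.mp h⟩
        · exfalso
          rcases dmem2 q with ⟨-, l, hlG, hl⟩ | hz'
          · rw [h] at hl
            exact hmG (wl_inj.mp hl.symm ▸ hlG)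
          · rw [hz'] at hz; exact absurd hz (lt_irrefl _)
      obtain ⟨l, -, hlm⟩ := this
      exact ⟨l, hlm⟩
  -- no maximum
  have hLmax' : ∀ m : L, ∃ x, m < x := by
    intro m
    by_cases hmG : m ∈ G
    · obtain ⟨-, ⟨s, hs1, hs2, hsC⟩⟩ := hCd (mkC h₀ (wl L m) (Or.inl hh₀))
        (mkC_mem_core.mpr ⟨hh₀, m, hmG, rfl⟩)
      obtain ⟨as, ys, hs, rfl⟩ := C_cases s
      obtain ⟨hasH, gs, hgsG, hys⟩ := mkC_mem_core.mp hsC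
      subst hys
      have hc' : mkC h₀ (wl L m) (Or.inl hh₀) < mkC h₀ (wt L) (Or.inl hh₀) := by
        rw [mkC_lt_mkC]; exact Or.inr ⟨rfl, wl_lt_wt m⟩
      have h1 := hs2 _ hc'
      rw [mkC_le_mkC] at h1
      rw [mkC_lt_mkC] at hs1
      have has : as = h₀ := by
        rcases h1 with h1 | ⟨h1, -⟩
        · rcases hs1 with h' | ⟨h', -⟩
          · exact absurd (h'.trans h1) (lt_irrefl _)
          · exact h'.symm
        · exact h1
      rcases hs1 with h' | ⟨-, h'⟩
      · rw [has] at h'; exact absurd h' (lt_irrefl _)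
      · exact ⟨gs, wl_lt_wl.mp h'⟩
    · have hlt : (mkD h₀ (wl L m) ⊤ (Or.inl hh₀) (Or.inr rfl) : DD A L B H G) <
          mkD h₀ (wt L) ⊤ (Or.inl hh₀) (Or.inr rfl) := by
        rw [mkD_lt_mkD]; exact Or.inr ⟨rfl, Or.inl (wl_lt_wt m)⟩
      obtain ⟨q, hq1, hq2⟩ := exists_between hlt
      obtain ⟨hqA, hqy1, hqy2⟩ := fiber_y _ _ _ _ _ _ q hq1 hq2
      have : ∃ l, dY q = wl L l := by
        rcases hqy2 with h | ⟨h, hz⟩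
        · rcases W_trichotomy (dY q) with hy | hy | ⟨l, hy⟩
          · rw [hy] at hqy1; exact absurd hqy1 (not_lt.mpr bot_le)
          · rw [hy] at h; exact absurd h (lt_irrefl _)
          · exact ⟨l, hy⟩
        · exfalso
          rcases dmem2 q with ⟨-, l, hlG, hl⟩ | hz'
          · rw [h] at hl
            exact absurd hl (wt_ne_wl l)
          · rw [hz'] at hz; exact absurd hz (lt_irrefl _)
      obtain ⟨l, hl⟩ := this
      rw [hl] at hqy1
      exact ⟨l, wl_lt_wl.mp hqy1⟩
  -- G discretely embedded in L
  have hGd : DiscretelyEmbedded G := by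
    intro g hg
    obtain ⟨⟨p, hp1, hp2, hpC⟩, ⟨s, hs1, hs2, hsC⟩⟩ := hCd (mkC h₀ (wl L g) (Or.inl hh₀))
      (mkC_mem_core.mpr ⟨hh₀, g, hg, rfl⟩)
    obtain ⟨ap, yp, hp, rfl⟩ := C_cases p
    obtain ⟨hapH, gp, hgpG, hyp⟩ := mkC_mem_core.mp hpC
    subst hyp
    obtain ⟨as, ys, hs, rfl⟩ := C_cases s
    obtain ⟨hasH, gs, hgsG, hys⟩ := mkC_mem_core.mp hsC
    subst hys
    -- ap = h₀
    have hap : ap = h₀ := by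
      have hc' : mkC h₀ (⊥ : WW L) (Or.inr rfl) < mkC h₀ (wl L g) (Or.inl hh₀) := by
        rw [mkC_lt_mkC]; exact Or.inr ⟨rfl, wbot_lt_wl g⟩
      have h1 := hp2 _ hc'
      rw [mkC_le_mkC] at h1
      rw [mkC_lt_mkC] at hp1
      rcases h1 with h1 | ⟨h1, -⟩
      · rcases hp1 with h' | ⟨h', -⟩
        · exact absurd (h1.trans h') (lt_irrefl _)
        · exact h'
      · exact h1.symm
    have has : as = h₀ := by
      have hc' : mkC h₀ (wl L g) (Or.inl hh₀) < mkC h₀ (wt L) (Or.inl hh₀) := by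
        rw [mkC_lt_mkC]; exact Or.inr ⟨rfl, wl_lt_wt g⟩
      have h1 := hs2 _ hc'
      rw [mkC_le_mkC] at h1
      rw [mkC_lt_mkC] at hs1
      rcases h1 with h1 | ⟨h1, -⟩
      · rcases hs1 with h' | ⟨h', -⟩
        · exact absurd (h'.trans h1) (lt_irrefl _)
        · exact h'.symm
      · exact h1
    rw [mkC_lt_mkC] at hp1 hs1
    have hgp : gp < g := by
      rcases hp1 with h | ⟨-, h⟩
      · rw [hap] at h; exact absurd h (lt_irrefl _)
      · exact wl_lt_wl.mp h
    have hgs : g < gs := by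
      rcases hs1 with h | ⟨-, h⟩
      · rw [has] at h; exact absurd h (lt_irrefl _)
      · exact wl_lt_wl.mp h
    refine ⟨⟨gp, hgp, ?_, hgpG⟩, ⟨gs, hgs, ?_, hgsG⟩⟩
    · intro y hy
      have hc' : mkC h₀ (wl L y) (Or.inl hh₀) < mkC h₀ (wl L g) (Or.inl hh₀) := by
        rw [mkC_lt_mkC]; exact Or.inr ⟨rfl, wl_lt_wl.mpr hy⟩
      have h1 := hp2 _ hc'
      rw [mkC_le_mkC] at h1
      rcases h1 with h1 | ⟨-, h1⟩
      · rw [hap] at h1; exact absurd h1 (lt_irrefl _)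
      · exact wl_le_wl.mp h1
    · intro y hy
      have hc' : mkC h₀ (wl L g) (Or.inl hh₀) < mkC h₀ (wl L y) (Or.inl hh₀) := by
        rw [mkC_lt_mkC]; exact Or.inr ⟨rfl, wl_lt_wl.mpr hy⟩
      have h1 := hs2 _ hc'
      rw [mkC_le_mkC] at h1
      rcases h1 with h1 | ⟨-, h1⟩
      · rw [has] at h1; exact absurd h1 (lt_irrefl _)
      · exact wl_le_wl.mp h1
  -- no gaps in L ∖ G
  have hnogap : ¬∃ x y : L, x ∉ G ∧ y ∉ G ∧ x < y ∧ ¬∃ z, x < z ∧ z < y := by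
    rintro ⟨x, y, hxG, hyG, hxy, hmid⟩
    have hlt : (mkD h₀ (wl L x) ⊤ (Or.inl hh₀) (Or.inr rfl) : DD A L B H G) <
        mkD h₀ (wl L y) ⊤ (Or.inl hh₀) (Or.inr rfl) := by
      rw [mkD_lt_mkD]; exact Or.inr ⟨rfl, Or.inl (wl_lt_wl.mpr hxy)⟩
    obtain ⟨q, hq1, hq2⟩ := exists_between hlt
    obtain ⟨hqA, hqy1, hqy2⟩ := fiber_y _ _ _ _ _ _ q hq1 hq2
    rcases hqy2 with h | ⟨h, hz⟩
    · obtain ⟨l, hl⟩ : ∃ l, dY q = wl L l := by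
        rcases W_trichotomy (dY q) with hy | hy | ⟨l, hy⟩
        · rw [hy] at hqy1; exact absurd hqy1 (not_lt.mpr bot_le)
        · rw [hy] at h; exact absurd h (not_lt.mpr (le_wt _))
        · exact ⟨l, hy⟩
      rw [hl] at hqy1 h
      exact hmid ⟨l, wl_lt_wl.mp hqy1, wl_lt_wl.mp h⟩
    · rcases dmem2 q with ⟨-, l, hlG, hl⟩ | hz'
      · rw [h] at hl
        exact hyG (wl_inj.mp hl.symm ▸ hlG)
      · rw [hz'] at hz; exact absurd hz (lt_irrefl _)
  -- separability of L
  have hLsep : ∃ Q : Set L, Q.Countable ∧ @Dense L (Preorder.topology L) Q := by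
    refine ⟨(fun q : DD A L B H G => eL G hG (dY q)) '' QD, hQDc.image _, ?_⟩
    rw [dense_order_iff hLmin' hLmax']
    intro x a b hax hxb
    have hlt : (mkD h₀ (wl L a) ⊤ (Or.inl hh₀) (Or.inr rfl) : DD A L B H G) <
        mkD h₀ (wl L x) ⊤ (Or.inl hh₀) (Or.inr rfl) := by
      rw [mkD_lt_mkD]; exact Or.inr ⟨rfl, Or.inl (wl_lt_wl.mpr hax)⟩
    obtain ⟨q, hqQ, hq1, hq2⟩ := hQDd _ _ hlt
    obtain ⟨hqA, hqy1, hqy2⟩ := fiber_y _ _ _ _ _ _ q hq1 hq2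
    obtain ⟨l, hl, hlx⟩ : ∃ l, dY q = wl L l ∧ l ≤ x := by
      rcases hqy2 with h | ⟨h, -⟩
      · rcases W_trichotomy (dY q) with hy | hy | ⟨l, hy⟩
        · rw [hy] at hqy1; exact absurd hqy1 (not_lt.mpr bot_le)
        · rw [hy] at h; exact absurd h (not_lt.mpr (le_wt _))
        · rw [hy] at h; exact ⟨l, hy, (wl_lt_wl.mp h).le⟩
      · rcases W_trichotomy (dY q) with hy | hy | ⟨l, hy⟩
        · rw [hy] at hqy1; exact absurd hqy1 (not_lt.mpr bot_le)
        · rw [hy] at h; exact absurd h (wt_ne_wl x)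
        · rw [hy] at h; exact ⟨l, hy, (wl_inj.mp h).le⟩
    rw [hl] at hqy1
    exact ⟨l, ⟨q, hqQ, by show eL G hG (dY q) = l; rw [hl]; simp⟩, wl_lt_wl.mp hqy1, lt_of_le_of_lt hlx hxb⟩
  refine ⟨A_iso_real hH hG eD, B_iso_real hH hG hCd eD, hHc, hGc, hLc, hLsep, ?_, ?_, hGd, hnogap⟩
  · rintro ⟨m, hm⟩
    obtain ⟨x, hx⟩ := hLmin' m
    exact absurd (hm x) (not_le.mpr hx)
  · rintro ⟨m, hm⟩
    obtain ⟨x, hx⟩ := hLmax' m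
    exact absurd (hm x) (not_le.mpr hx)

end Dir12C


/-- with `C`, `C'` as above and
`D = {(c,z) ∈ C ×ₗ WithTop B : c ∈ C' ∨ z = ⊤}`, the following are equivalent:
(1) `C'` is discretely embedded into `C` and `D ≃o ℝ`;
(2) `A ≃o ℝ`, `B ≃o ℝ`, `H` and `G` are countable, `L` is Dedekind complete, `L` has a
countable dense subset (w.r.t. the order topology), `L` has neither a least nor a greatest
element, `G` is discretely embedded into `L`, and no two elements of `L ∖ G` form a gap. -/

theorem stmt_11 {A L B : Type*} [LinearOrder A] [LinearOrder L] [LinearOrder B] [Nonempty B]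
    (H : Set A) (hH : H.Nonempty) (G : Set L) (hG : G.Nonempty) :
    (DiscretelyEmbedded (PLP1core H G) ∧
      Nonempty ({q : PLP1 A L H ×ₗ WithTop B //
        (ofLex q).1 ∈ PLP1core H G ∨ (ofLex q).2 = ⊤} ≃o ℝ)) ↔
    (Nonempty (A ≃o ℝ) ∧ Nonempty (B ≃o ℝ) ∧
      H.Countable ∧ G.Countable ∧
      (∀ S : Set L, S.Nonempty → BddAbove S → ∃ m, IsLUB S m) ∧
      (∃ Q : Set L, Q.Countable ∧ @Dense L (Preorder.topology L) Q) ∧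
      (¬∃ m : L, ∀ x, m ≤ x) ∧ (¬∃ m : L, ∀ x, x ≤ m) ∧
      DiscretelyEmbedded G ∧
      ¬∃ x y : L, x ∉ G ∧ y ∉ G ∧ x < y ∧ ¬∃ z, x < z ∧ z < y) := by
  constructor
  · rintro ⟨hCd, ⟨eD⟩⟩
    exact dir12 hH hG hCd eD
  · rintro ⟨heA, heB, hHc, hGc, hLc, hLsep, hLmin, hLmax, hGd, hnogap⟩
    exact dir21 hH hG heA heB hHc hGc hLc hLsep hLmin hLmax hGd hnogap
end
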